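/- arXiv:2404.04706 — 5 statements merged into one kernel-verified Lean document; each statement's English description precedes it below -/
import Mathlib

section
/- The Laplace mechanism is ε-differentially private: Let ε > 0 and let f : ℕ^𝒳 → ℝ^k be a vector of numeric queries with finite ℓ1 global sensitivity Δ₁(f) = sup over neighboring databases x, y of ∑_{j=1}^k |f_j(x) − f_j(y)|. The Laplace mechanism M_L, which on input database x outputs f(x) + (Z₁, …, Z_k) where the Z_j are independent random variables each distributed according to the Laplace distribution with density z ↦ (1/(2b)) · exp(−|z|/b) with scale b = Δ₁(f)/ε, is ε-differentially private. -/
open MeasureTheory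
open scoped ENNReal

lemma lintegral_pi_prod {n : ℕ} (g : Fin n → ℝ → ℝ≥0∞) (hg : ∀ i, Measurable (g i)) :
    ∫⁻ x : Fin n → ℝ, ∏ i, g i (x i) ∂(Measure.pi fun _ => (volume : Measure ℝ)) =
      ∏ i, ∫⁻ z, g i z := by
  induction n with
  | zero => rw [Measure.pi_of_empty]; simp
  | succ n ih =>
      have mp := (measurePreserving_piFinSuccAbove
        (fun _ : Fin (n+1) => (volume : Measure ℝ)) 0).symm
      have hF : Measurable fun x : Fin (n+1) → ℝ => ∏ i, g i (x i) :=
        Finset.measurable_prod _ fun i _ => (hg i).comp (measurable_pi_apply i)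
      rw [← mp.lintegral_comp hF]
      simp only [MeasurableEquiv.piFinSuccAbove_symm_apply, Fin.insertNthEquiv, Equiv.coe_fn_mk, Fin.insertNth_zero,
        Fin.prod_univ_succ, Fin.cons_zero, Fin.cons_succ, Fin.zero_succAbove, cast_eq]
      have hG2 : Measurable fun y : Fin n → ℝ => ∏ x : Fin n, g x.succ (y x) :=
        Finset.measurable_prod _ fun i _ => (hg i.succ).comp (measurable_pi_apply i)
      rw [lintegral_prod_mul (f := g 0) (g := fun y : Fin n → ℝ => ∏ x : Fin n, g x.succ (y x))
        (hg 0).aemeasurable hG2.aemeasurable]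
      rw [ih (fun i => g i.succ) (fun i => hg i.succ)]

lemma pi_withDensity_ofReal {k : ℕ} (ρ : ℝ → ℝ) (hρ : Measurable ρ) :
    Measure.pi (fun _ : Fin k => volume.withDensity fun u => ENNReal.ofReal (ρ u)) =
      (Measure.pi fun _ : Fin k => (volume : Measure ℝ)).withDensity
        fun z => ∏ j, ENNReal.ofReal (ρ (z j)) := by
  have hg : Measurable fun u => ENNReal.ofReal (ρ u) := ENNReal.measurable_ofReal.comp hρ
  set g : ℝ → ℝ≥0∞ := fun u => ENNReal.ofReal (ρ u) with hgdef
  haveI : SigmaFinite (volume.withDensity g) := by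
    rw [hgdef]; infer_instance
  apply Measure.pi_eq
  intro s hs
  rw [withDensity_apply _ (MeasurableSet.univ_pi hs),
    ← lintegral_indicator (MeasurableSet.univ_pi hs)]
  have hind : ∀ z : Fin k → ℝ,
      (Set.pi Set.univ s).indicator (fun z => ∏ j, g (z j)) z
        = ∏ j, (s j).indicator g (z j) := by
    intro z
    by_cases hz : z ∈ Set.pi Set.univ s
    · rw [Set.indicator_of_mem hz]
      exact Finset.prod_congr rfl fun j _ =>
        (Set.indicator_of_mem (hz j (Set.mem_univ j)) g).symm
    · rw [Set.indicator_of_notMem hz]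
      rw [Set.mem_univ_pi] at hz
      push_neg at hz
      obtain ⟨j, hj⟩ := hz
      exact (Finset.prod_eq_zero (Finset.mem_univ j)
        (Set.indicator_of_notMem hj g)).symm
  change ∫⁻ a, (Set.univ.pi s).indicator (fun z => ∏ j, g (z j)) a ∂_ = _
  simp_rw [hind]
  rw [lintegral_pi_prod _ (fun i => hg.indicator (hs i))]
  exact Finset.prod_congr rfl fun j _ =>
    by rw [lintegral_indicator (hs j), withDensity_apply _ (hs j)]


/-- The ℓ1 distance `‖x - y‖₁` between databases `x y : 𝒳 →₀ ℕ`. -/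
def dbDist {𝒳 : Type*} [DecidableEq 𝒳] (x y : 𝒳 →₀ ℕ) : ℕ :=
  (x.support ∪ y.support).sum fun a => ((x a : ℤ) - (y a : ℤ)).natAbs

/-- Databases `x` and `y` are neighboring if `‖x - y‖₁ ≤ 1`. -/
def Neighboring {𝒳 : Type*} [DecidableEq 𝒳] (x y : 𝒳 →₀ ℕ) : Prop :=
  dbDist x y ≤ 1

/-- A mechanism `M` is `(ε, δ)`-differentially private if for all measurable sets `S` and all
neighboring databases `x, y`, `M x S ≤ e^ε * M y S + δ`. -/
def IsDP {𝒳 : Type*} [DecidableEq 𝒳] {Ω : Type*} [MeasurableSpace Ω]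
    (M : (𝒳 →₀ ℕ) → Measure Ω) (ε δ : ℝ) : Prop :=
  ∀ x y : 𝒳 →₀ ℕ, Neighboring x y → ∀ S : Set Ω, MeasurableSet S →
    M x S ≤ ENNReal.ofReal (Real.exp ε) * M y S + ENNReal.ofReal δ

/-- The Laplace probability measure on ℝ with mean `0` and scale `b`, given by the
density `z ↦ (1/(2b)) exp (-|z|/b)` with respect to Lebesgue measure. -/
noncomputable def laplaceMeasure (b : ℝ) : Measure ℝ :=
  volume.withDensity fun z => ENNReal.ofReal ((1 / (2 * b)) * Real.exp (-|z| / b))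

/-- The Laplace mechanism for a vector-valued query `f : ℕ^𝒳 → ℝ^k` with noise scale `b`:
on input database `x` it outputs `f x + (Z 1, …, Z k)` where the `Z j` are independent
Laplace random variables of scale `b`. -/
noncomputable def laplaceMechanism {𝒳 : Type*} {k : ℕ} (f : (𝒳 →₀ ℕ) → (Fin k → ℝ))
    (b : ℝ) : (𝒳 →₀ ℕ) → Measure (Fin k → ℝ) :=
  fun x => (Measure.pi fun _ : Fin k => laplaceMeasure b).map fun z => f x + z

/-- **The Laplace mechanism is `ε`-differentially private.** Let `ε > 0` and let
`f : ℕ^𝒳 → ℝ^k` have ℓ1 global sensitivity (over neighboring databases) at most `Δ > 0`.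
Then the Laplace mechanism with scale `b = Δ/ε` is `ε`-differentially private
(i.e. `(ε, 0)`-DP). -/
theorem laplaceMechanism_isDP {𝒳 : Type*} [DecidableEq 𝒳] {k : ℕ}
    (f : (𝒳 →₀ ℕ) → (Fin k → ℝ)) (ε Δ : ℝ) (hε : 0 < ε) (hΔ : 0 < Δ)
    (hsens : ∀ x y : 𝒳 →₀ ℕ, Neighboring x y → ∑ j, |f x j - f y j| ≤ Δ) :
    IsDP (laplaceMechanism f (Δ / ε)) ε 0 := by
  intro x y hxy S hS
  have hb0 : 0 < Δ / ε := div_pos hΔ hε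
  set b : ℝ := Δ / ε with hbdef
  set ρ : ℝ → ℝ := fun u => (1 / (2 * b)) * Real.exp (-|u| / b) with hρdef
  have hρ : Measurable ρ := by
    apply Measurable.const_mul
    exact (Real.measurable_exp.comp ((measurable_id.abs.neg).div_const b))
  set g : ℝ → ℝ≥0∞ := fun u => ENNReal.ofReal (ρ u) with hgdef
  have hg : Measurable g := ENNReal.measurable_ofReal.comp hρ
  set G : (Fin k → ℝ) → ℝ≥0∞ := fun z => ∏ j, g (z j) with hGdef
  have hG : Measurable G :=
    Finset.measurable_prod _ fun j _ => hg.comp (measurable_pi_apply j)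
  have hlap : (Measure.pi fun _ : Fin k => laplaceMeasure b) =
      (volume : Measure (Fin k → ℝ)).withDensity G := by
    rw [show (fun _ : Fin k => laplaceMeasure b)
        = fun _ : Fin k => volume.withDensity fun u => ENNReal.ofReal (ρ u) from rfl,
      pi_withDensity_ofReal ρ hρ, ← volume_pi]
  have hmap : ∀ u : (𝒳 →₀ ℕ), Measurable fun z : Fin k → ℝ => f u + z :=
    fun u => measurable_id.const_add (f u)
  have key : ∀ u : (𝒳 →₀ ℕ), laplaceMechanism f b u S
      = ∫⁻ z, ((fun w : Fin k → ℝ => f u + w) ⁻¹' S).indicator G z := by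
    intro u
    rw [laplaceMechanism, Measure.map_apply (hmap u) hS, hlap,
      withDensity_apply _ ((hmap u) hS), ← lintegral_indicator ((hmap u) hS)]
  -- pointwise density comparison
  have hpt : ∀ cj u : ℝ, g (u + cj) ≤ ENNReal.ofReal (Real.exp (|cj| / b)) * g u := by
    intro cj u
    rw [hgdef]
    dsimp only
    rw [← ENNReal.ofReal_mul (Real.exp_nonneg _)]
    apply ENNReal.ofReal_le_ofReal
    rw [hρdef]
    dsimp only
    rw [← mul_assoc, mul_comm (Real.exp (|cj| / b)), mul_assoc]
    refine mul_le_mul_of_nonneg_left ?_ (by positivity)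
    rw [← Real.exp_add]
    apply Real.exp_le_exp.2
    rw [← add_div]
    have h1 : |u| ≤ |u + cj| + |cj| := by
      calc |u| = |(u + cj) + (-cj)| := by ring_nf
      _ ≤ |u + cj| + |-cj| := abs_add_le _ _
      _ = |u + cj| + |cj| := by rw [abs_neg]
    gcongr
    linarith
  set c : Fin k → ℝ := f y - f x with hcdef
  have hsum : ∑ j, |c j| / b ≤ ε := by
    rw [← Finset.sum_div]
    have h1 : ∑ j, |c j| ≤ Δ := by
      have := hsens x y hxy
      refine le_trans (le_of_eq (Finset.sum_congr rfl fun j _ => ?_)) this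
      rw [hcdef]
      simp [abs_sub_comm (f y j) (f x j)]
    have h2 : Δ / b = ε := by rw [hbdef]; field_simp
    calc (∑ j, |c j|) / b ≤ Δ / b := by gcongr
    _ = ε := h2
  have hGbound : ∀ z : Fin k → ℝ, G (z + c) ≤ ENNReal.ofReal (Real.exp ε) * G z := by
    intro z
    calc G (z + c) = ∏ j, g (z j + c j) := rfl
    _ ≤ ∏ j, (ENNReal.ofReal (Real.exp (|c j| / b)) * g (z j)) :=
        Finset.prod_le_prod' fun j _ => hpt (c j) (z j)
    _ = (∏ j, ENNReal.ofReal (Real.exp (|c j| / b))) * ∏ j, g (z j) :=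
        Finset.prod_mul_distrib
    _ ≤ ENNReal.ofReal (Real.exp ε) * G z := by
        refine mul_le_mul_left ?_ _
        rw [← ENNReal.ofReal_prod_of_nonneg fun j _ => Real.exp_nonneg _, ← Real.exp_sum]
        exact ENNReal.ofReal_le_ofReal (Real.exp_le_exp.2 hsum)
  set A : (𝒳 →₀ ℕ) → Set (Fin k → ℝ) := fun u => (fun w : Fin k → ℝ => f u + w) ⁻¹' S
    with hAdef
  have hswap : ∀ z : Fin k → ℝ,
      (A x).indicator G (z + c) = (A y).indicator (fun w => G (w + c)) z := by
    intro z
    have hfc : f x + (z + c) = f y + z := by rw [hcdef]; abel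
    have hmem : z + c ∈ A x ↔ z ∈ A y := by
      rw [hAdef]
      simp only [Set.mem_preimage]
      rw [hfc]
    by_cases hz : z ∈ A y
    · rw [Set.indicator_of_mem (hmem.2 hz), Set.indicator_of_mem hz]
    · rw [Set.indicator_of_notMem (fun h => hz (hmem.1 h)), Set.indicator_of_notMem hz]
  calc laplaceMechanism f b x S = ∫⁻ z, (A x).indicator G z := key x
  _ = ∫⁻ z, (A x).indicator G (z + c) := (lintegral_add_right_eq_self _ c).symm
  _ ≤ ∫⁻ z, ENNReal.ofReal (Real.exp ε) * (A y).indicator G z := by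
      apply lintegral_mono
      intro z
      dsimp only
      rw [hswap z]
      by_cases hz : z ∈ A y
      · rw [Set.indicator_of_mem hz, Set.indicator_of_mem hz]
        exact hGbound z
      · rw [Set.indicator_of_notMem hz, Set.indicator_of_notMem hz, mul_zero]
  _ = ENNReal.ofReal (Real.exp ε) * ∫⁻ z, (A y).indicator G z :=
      lintegral_const_mul' _ _ ENNReal.ofReal_ne_top
  _ ≤ ENNReal.ofReal (Real.exp ε) * laplaceMechanism f b y S + ENNReal.ofReal 0 := by
      rw [← key y]
      simp
end

section
/- The Gaussian mechanism is (ε,δ)-differentially private: Let ε ∈ (0,1), δ ∈ (0,1), and let f : ℕ^𝒳 → ℝ^k be a vector of numeric queries with finite ℓ2 global sensitivity Δ₂(f) = sup over neighboring databases x, y of ‖f(x) − f(y)‖₂. Let c > 0 satisfy c² > 2·ln(1.25/δ) and let σ ≥ c · Δ₂(f)/ε. Then the Gaussian mechanism M_G, which on input database x outputs f(x) + (Z₁, …, Z_k) where the Z_j are independent N(0, σ²) Gaussian random variables, is (ε,δ)-differentially private. -/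
set_option maxHeartbeats 1000000

open scoped ENNReal NNReal


open MeasureTheory

open ProbabilityTheory

/-- The Gaussian mechanism for a vector-valued query `f : ℕ^𝒳 → ℝ^k` with noise standard
deviation `σ`: on input database `x` it outputs `f x + (Z 1, …, Z k)` where the `Z j` are
independent `N(0, σ²)` Gaussian random variables. -/
noncomputable def gaussianMechanism {𝒳 : Type*} {k : ℕ} (f : (𝒳 →₀ ℕ) → (Fin k → ℝ))
    (σ : ℝ) : (𝒳 →₀ ℕ) → Measure (Fin k → ℝ) :=
  fun x => (Measure.pi fun _ : Fin k => gaussianReal 0 (σ ^ 2).toNNReal).map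
    fun z => f x + z


section auxGM

lemma aux_exp_le {x : ℝ} (hx : x < 1) : Real.exp x ≤ (1 - x)⁻¹ := by
  have h2 : 0 < 1 - x := by linarith
  have h : 1 - x ≤ (Real.exp x)⁻¹ := by
    rw [← Real.exp_neg]; linarith [Real.add_one_le_exp (-x)]
  have h4 : Real.exp x * (Real.exp x)⁻¹ = 1 := mul_inv_cancel₀ (ne_of_gt (Real.exp_pos x))
  rw [inv_eq_one_div, le_div_iff₀ h2]
  nlinarith [Real.exp_pos x]

lemma aux_lintegral_pi_prod {n : ℕ} (μ : Measure ℝ) [SigmaFinite μ]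
    (ρ : Fin n → ℝ → ℝ≥0∞) (hρ : ∀ j, Measurable (ρ j)) :
    ∫⁻ z, ∏ j, ρ j (z j) ∂(Measure.pi fun _ : Fin n => μ) = ∏ j, ∫⁻ x, ρ j x ∂μ := by
  induction n with
  | zero => simp [lintegral_const, Measure.pi_univ]
  | succ n ih =>
    rw [← ((measurePreserving_piFinSuccAbove (fun _ : Fin (n+1) => μ) 0).symm).lintegral_comp_emb
      (MeasurableEquiv.measurableEmbedding _)]
    simp_rw [MeasurableEquiv.piFinSuccAbove_symm_apply, Fin.insertNthEquiv,
      Fin.prod_univ_succ, Fin.insertNth_zero]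
    simp only [Fin.zero_succAbove, cast_eq, Fin.cons_zero, Fin.cons_succ, Equiv.coe_fn_mk]
    rw [lintegral_prod_mul (μ := μ) (ν := Measure.pi fun _ : Fin n => μ) (f := ρ 0)
      (g := fun y : Fin n → ℝ => ∏ x : Fin n, ρ x.succ (y x)) (hρ 0).aemeasurable
      (Finset.measurable_prod Finset.univ fun j _ =>
        (hρ j.succ).comp (measurable_pi_apply j)).aemeasurable]
    rw [ih (fun j => ρ j.succ) (fun j => hρ j.succ)]

section gauss

variable {k : ℕ} {v : ℝ≥0}

lemma aux_meas_addconst (u : Fin k → ℝ) : Measurable fun z : Fin k → ℝ => z + u :=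
  measurable_pi_lambda _ fun j => by simp only [Pi.add_apply]; fun_prop

lemma aux_map_add (u : Fin k → ℝ) :
    (Measure.pi fun _ : Fin k => gaussianReal 0 v).map (fun z => z + u)
      = Measure.pi (fun j => gaussianReal (u j) v) := by
  refine (Measure.pi_eq fun s hs => ?_).symm
  rw [Measure.map_apply (aux_meas_addconst u) (MeasurableSet.univ_pi hs)]
  have hpre : (fun z : Fin k → ℝ => z + u) ⁻¹' (Set.pi Set.univ s)
      = Set.pi Set.univ (fun j => (· + u j) ⁻¹' (s j)) := by
    ext z
    simp [Set.mem_pi]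
  rw [hpre, Measure.pi_pi]
  refine Finset.prod_congr rfl fun j _ => ?_
  rw [← Measure.map_apply (measurable_add_const (u j)) (hs j),
    gaussianReal_map_add_const, zero_add]

lemma aux_gauss_density (hv : v ≠ 0) (m : ℝ) :
    gaussianReal m v = (gaussianReal 0 v).withDensity
      (fun x => ENNReal.ofReal (Real.exp ((2 * x * m - m ^ 2) / (2 * (v : ℝ))))) := by
  have hv' : (0 : ℝ) < (v : ℝ) := by positivity
  rw [gaussianReal_of_var_ne_zero _ hv, gaussianReal_of_var_ne_zero _ hv, ← withDensity_mul]
  · congr 1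
    funext x
    simp only [gaussianPDF, Pi.mul_apply]
    rw [← ENNReal.ofReal_mul (gaussianPDFReal_nonneg _ _ _)]
    congr 1
    simp only [gaussianPDFReal, mul_assoc, ← Real.exp_add]
    congr 1
    congr 1
    field_simp
    ring
  · exact measurable_gaussianPDF _ _
  · fun_prop

lemma aux_exp_prod {k : ℕ} (u z : Fin k → ℝ) (w : ℝ) :
    ∏ j, ENNReal.ofReal (Real.exp ((2 * z j * u j - u j ^ 2) / w))
      = ENNReal.ofReal (Real.exp ((2 * ∑ j, z j * u j - ∑ j, u j ^ 2) / w)) := by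
  rw [← ENNReal.ofReal_prod_of_nonneg (fun j _ => (Real.exp_pos _).le), ← Real.exp_sum]
  congr 2
  rw [← Finset.sum_div]
  congr 1
  rw [Finset.sum_sub_distrib]
  congr 1
  rw [Finset.mul_sum]
  exact Finset.sum_congr rfl fun j _ => by ring

lemma aux_pi_gauss_withDensity (hv : v ≠ 0) (u : Fin k → ℝ) :
    Measure.pi (fun j : Fin k => gaussianReal (u j) v)
      = (Measure.pi fun _ : Fin k => gaussianReal 0 v).withDensity
          (fun z => ∏ j, ENNReal.ofReal
            (Real.exp ((2 * z j * u j - u j ^ 2) / (2 * (v : ℝ))))) := by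
  have hρmeas : ∀ j : Fin k, Measurable (fun x : ℝ =>
      ENNReal.ofReal (Real.exp ((2 * x * u j - u j ^ 2) / (2 * (v : ℝ))))) := by fun_prop
  refine Measure.pi_eq fun s hs => ?_
  rw [withDensity_apply _ (MeasurableSet.univ_pi hs)]
  have hind : (Set.pi Set.univ s).indicator
      (fun z : Fin k → ℝ => ∏ j, ENNReal.ofReal
        (Real.exp ((2 * z j * u j - u j ^ 2) / (2 * (v : ℝ)))))
      = fun z => ∏ j, (s j).indicator (fun x : ℝ =>
          ENNReal.ofReal (Real.exp ((2 * x * u j - u j ^ 2) / (2 * (v : ℝ))))) (z j) := by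
    funext z
    by_cases hz : z ∈ Set.pi Set.univ s
    · rw [Set.indicator_of_mem hz]
      refine Finset.prod_congr rfl fun j _ => ?_
      rw [Set.indicator_of_mem (hz j (Set.mem_univ j))]
    · rw [Set.indicator_of_notMem hz]
      obtain ⟨j, hj⟩ := not_forall.mp (by simpa [Set.mem_pi] using hz)
      exact (Finset.prod_eq_zero (Finset.mem_univ j)
        (by rw [Set.indicator_of_notMem hj])).symm
  rw [← lintegral_indicator (MeasurableSet.univ_pi hs)
      (fun z : Fin k → ℝ => ∏ j, ENNReal.ofReal
        (Real.exp ((2 * z j * u j - u j ^ 2) / (2 * (v : ℝ))))), hind,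
    aux_lintegral_pi_prod _ _ (fun j => (hρmeas j).indicator (hs j))]
  refine Finset.prod_congr rfl fun j _ => ?_
  rw [lintegral_indicator (hs j), ← withDensity_apply _ (hs j), ← aux_gauss_density hv]

end gauss

section master

variable {k : ℕ} {v : ℝ≥0}

lemma aux_master (hv : v ≠ 0) (u : Fin k → ℝ) {A : Set (Fin k → ℝ)} (hA : MeasurableSet A) :
    (Measure.pi fun _ : Fin k => gaussianReal 0 v) {z | z + u ∈ A}
      = ∫⁻ z in A, ENNReal.ofReal
          (Real.exp ((2 * ∑ j, z j * u j - ∑ j, u j ^ 2) / (2 * (v : ℝ))))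
          ∂(Measure.pi fun _ : Fin k => gaussianReal 0 v) := by
  have h1 : {z : Fin k → ℝ | z + u ∈ A} = (fun z => z + u) ⁻¹' A := rfl
  rw [h1, ← Measure.map_apply (aux_meas_addconst u) hA, aux_map_add u,
    aux_pi_gauss_withDensity hv u, withDensity_apply _ hA]
  exact lintegral_congr fun z => aux_exp_prod u z _

lemma aux_meas_neg : Measurable fun z : Fin k → ℝ => -z :=
  measurable_pi_lambda _ fun j => (measurable_pi_apply j).neg

lemma aux_map_neg :
    (Measure.pi fun _ : Fin k => gaussianReal 0 v).map (fun z => -z)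
      = Measure.pi fun _ : Fin k => gaussianReal 0 v := by
  have h1d : (gaussianReal 0 v).map (fun x : ℝ => -x) = gaussianReal 0 v := by
    have h := gaussianReal_map_const_mul (μ := 0) (v := v) (-1)
    have h2 : (⟨(-1 : ℝ) ^ 2, sq_nonneg _⟩ : ℝ≥0) = 1 := by ext; norm_num
    have h3 : (fun x : ℝ => -1 * x) = fun x : ℝ => -x := funext fun x => by ring
    rw [mul_zero, h3] at h
    rw [h]; congr 1; ext; simp
  refine (Measure.pi_eq fun s hs => ?_).symm
  rw [Measure.map_apply aux_meas_neg (MeasurableSet.univ_pi hs)]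
  have hpre : (fun z : Fin k → ℝ => -z) ⁻¹' (Set.pi Set.univ s)
      = Set.pi Set.univ (fun j => (fun x : ℝ => -x) ⁻¹' (s j)) := by
    ext z
    simp [Set.mem_pi]
  rw [hpre, Measure.pi_pi]
  refine Finset.prod_congr rfl fun j _ => ?_
  rw [← Measure.map_apply measurable_neg (hs j), h1d]

lemma aux_meas_sum (w : Fin k → ℝ) : Measurable fun z : Fin k → ℝ => ∑ j, z j * w j :=
  Finset.measurable_sum Finset.univ fun j _ => (measurable_pi_apply j).mul_const _

lemma aux_half (hv : v ≠ 0) (w : Fin k → ℝ) :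
    (Measure.pi fun _ : Fin k => gaussianReal 0 v) {z | 0 < ∑ j, z j * w j} ≤ 2⁻¹ := by
  have hA : MeasurableSet {z : Fin k → ℝ | 0 < ∑ j, z j * w j} :=
    measurableSet_lt measurable_const (aux_meas_sum w)
  have hB : MeasurableSet {z : Fin k → ℝ | ∑ j, z j * w j < 0} :=
    measurableSet_lt (aux_meas_sum w) measurable_const
  have hneg : (Measure.pi fun _ : Fin k => gaussianReal 0 v) {z | ∑ j, z j * w j < 0}
      = (Measure.pi fun _ : Fin k => gaussianReal 0 v) {z | 0 < ∑ j, z j * w j} := by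
    conv_rhs => rw [← aux_map_neg (k := k) (v := v)]
    rw [Measure.map_apply aux_meas_neg hA]
    congr 1
    ext z
    simp only [Set.mem_preimage, Set.mem_setOf_eq, Pi.neg_apply]
    rw [show ∑ j, -z j * w j = -∑ j, z j * w j by
      rw [← Finset.sum_neg_distrib]; exact Finset.sum_congr rfl fun j _ => by ring]
    exact ⟨fun h => by linarith, fun h => by linarith⟩
  have hdisj : Disjoint {z : Fin k → ℝ | 0 < ∑ j, z j * w j}
      {z : Fin k → ℝ | ∑ j, z j * w j < 0} := by
    rw [Set.disjoint_left]
    intro z h1 h2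
    simp only [Set.mem_setOf_eq] at h1 h2
    linarith
  have hle : (Measure.pi fun _ : Fin k => gaussianReal 0 v) {z | 0 < ∑ j, z j * w j}
      + (Measure.pi fun _ : Fin k => gaussianReal 0 v) {z | 0 < ∑ j, z j * w j} ≤ 1 := by
    nth_rewrite 2 [← hneg]
    rw [← measure_union hdisj hB]
    exact prob_le_one
  by_contra hcon
  push_neg at hcon
  have h2 := ENNReal.add_lt_add hcon hcon
  rw [ENNReal.inv_two_add_inv_two] at h2
  exact absurd (lt_of_lt_of_le h2 hle) (lt_irrefl _)

end master

section main

lemma aux_sum_shift {k : ℕ} (vv : Fin k → ℝ) (κ : ℝ) (z : Fin k → ℝ) :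
    ∑ j, (z j + κ * vv j) * vv j = (∑ j, z j * vv j) + κ * ∑ j, vv j ^ 2 := by
  rw [Finset.mul_sum, ← Finset.sum_add_distrib]
  exact Finset.sum_congr rfl fun j _ => by ring

lemma aux_toReal_mul_le {E : ℝ} (hE : 0 ≤ E) {a b : ℝ≥0∞} (hb : b ≠ ⊤)
    (h : ENNReal.ofReal E * a ≤ b) : E * a.toReal ≤ b.toReal := by
  have := ENNReal.toReal_mono hb h
  rwa [ENNReal.toReal_mul, ENNReal.toReal_ofReal hE] at this

lemma aux_le_toReal_mul {E : ℝ} (hE : 0 ≤ E) {a b : ℝ≥0∞} (hb : b ≠ ⊤)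
    (h : a ≤ ENNReal.ofReal E * b) : a.toReal ≤ E * b.toReal := by
  have hfin : ENNReal.ofReal E * b ≠ ⊤ := ENNReal.mul_ne_top ENNReal.ofReal_ne_top hb
  have := ENNReal.toReal_mono hfin h
  rwa [ENNReal.toReal_mul, ENNReal.toReal_ofReal hE] at this

lemma aux_vne {σ : ℝ} (hσ0 : 0 < σ) : (σ ^ 2).toNNReal ≠ 0 := by
  rw [← NNReal.coe_ne_zero, Real.coe_toNNReal _ (by positivity)]
  positivity

lemma aux_master' {k : ℕ} {σ : ℝ} (hσ0 : 0 < σ) (vv : Fin k → ℝ) (κ : ℝ)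
    {A : Set (Fin k → ℝ)} (hA : MeasurableSet A) :
    (Measure.pi fun _ : Fin k => gaussianReal 0 (σ ^ 2).toNNReal)
        {z | (fun j => z j + κ * vv j) ∈ A}
      = ∫⁻ z in A, ENNReal.ofReal (Real.exp
          ((2 * (κ * ∑ j, z j * vv j) - κ ^ 2 * ∑ j, vv j ^ 2) / (2 * σ ^ 2)))
          ∂(Measure.pi fun _ : Fin k => gaussianReal 0 (σ ^ 2).toNNReal) := by
  have h := aux_master (k := k) (aux_vne hσ0) (fun j => κ * vv j) hA
  have hset : {z : Fin k → ℝ | z + (fun j => κ * vv j) ∈ A}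
      = {z : Fin k → ℝ | (fun j => z j + κ * vv j) ∈ A} := rfl
  rw [hset] at h
  rw [h]
  refine lintegral_congr fun z => ?_
  congr 1
  rw [Real.coe_toNNReal _ (by positivity : (0:ℝ) ≤ σ ^ 2)]
  congr 1
  rw [show ∑ j, z j * (κ * vv j) = κ * ∑ j, z j * vv j from by
      rw [Finset.mul_sum]; exact Finset.sum_congr rfl fun j _ => by ring,
    show ∑ j, (κ * vv j) ^ 2 = κ ^ 2 * ∑ j, vv j ^ 2 from by
      rw [Finset.mul_sum]; exact Finset.sum_congr rfl fun j _ => by ring]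

end main


lemma aux_numB {σ ε δ c Δ D2 : ℝ} (hσ0 : 0 < σ) (hε0 : 0 < ε) (hε1 : ε < 1)
    (hδ0 : 0 < δ) (hδ1 : δ < 1) (hΔ : 0 < Δ) (hc : 0 < c)
    (hc2 : 2 * Real.log (1.25 / δ) < c ^ 2) (hcΔ : c * Δ ≤ σ * ε)
    (hD2 : 0 < D2) (hDΔ : Real.sqrt D2 ≤ Δ) (hca : σ ^ 2 * ε - D2 / 2 < 0) :
    (σ ^ 2 * ε - D2 / 2) ^ 2 / (σ ^ 2 * D2) ≤ 1 / 40 ∧ 15 / 16 ≤ δ := by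
  have hD2Δ2 : D2 ≤ Δ ^ 2 := by
    nlinarith [Real.sq_sqrt hD2.le, Real.sqrt_nonneg D2]
  have hc25 : 2 / 5 ≤ c ^ 2 := by
    have h45 : Real.log (δ / 1.25) ≤ δ / 1.25 - 1 := Real.log_le_sub_one_of_pos (by positivity)
    have hinv : Real.log ((1.25:ℝ) / δ) = -Real.log (δ / 1.25) := by
      rw [← Real.log_inv]
      congr 1
      rw [inv_div]
    have h08 : δ / 1.25 ≤ 4 / 5 := by
      rw [div_le_iff₀ (by norm_num : (0:ℝ) < 1.25)]; linarith
    linarith [hc2]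
  constructor
  · set D := Real.sqrt D2 with hD_def
    have hD0 : 0 < D := Real.sqrt_pos.mpr hD2
    have hD2eq : D ^ 2 = D2 := Real.sq_sqrt hD2.le
    have hcd : c * D ≤ σ * ε := le_trans (mul_le_mul_of_nonneg_left hDΔ hc.le) hcΔ
    have hcdσ : c * D ≤ σ := by nlinarith [mul_le_of_le_one_right hσ0.le hε1.le]
    have key : 10 * c * (D2 / 2 - σ ^ 2 * ε) ≤ σ * D := by
      have h1 : σ * (c * D) ≤ σ * (σ * ε) := mul_le_mul_of_nonneg_left hcd hσ0.le
      nlinarith [mul_le_mul_of_nonneg_right hcdσ hD0.le, hc25,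
        mul_pos hσ0 hD0, mul_le_mul_of_nonneg_left hc25 (mul_pos hσ0 hD0).le]
    have hsq : (10 * c * (D2 / 2 - σ ^ 2 * ε)) ^ 2 ≤ (σ * D) ^ 2 := by
      have h0 : 0 ≤ 10 * c * (D2 / 2 - σ ^ 2 * ε) := by nlinarith
      nlinarith [key]
    rw [div_le_iff₀ (by positivity)]
    nlinarith [hsq, hc25, hD2eq, hD2, sq_nonneg (σ ^ 2 * ε - D2 / 2),
      mul_le_mul_of_nonneg_right hc25 (sq_nonneg (σ ^ 2 * ε - D2 / 2))]
  · have hc2e : c ^ 2 < ε / 2 := by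
      have hsq2 : (c * Δ) ^ 2 ≤ (σ * ε) ^ 2 := by
        nlinarith [mul_self_le_mul_self (by positivity : (0:ℝ) ≤ c * Δ) hcΔ]
      nlinarith [hsq2, hca, hD2Δ2, hΔ, hε0, sq_nonneg Δ, mul_pos hΔ hΔ]
    have hlg : Real.log (1.25 / δ) < 1 / 4 := by linarith
    have h125 : (1.25:ℝ) / δ ≤ Real.exp ((1:ℝ)/4) := by
      rw [← Real.exp_log (show (0:ℝ) < 1.25 / δ by positivity)]
      exact Real.exp_le_exp.mpr hlg.le
    have he4 : Real.exp ((1:ℝ)/4) ≤ 4 / 3 := by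
      calc Real.exp ((1:ℝ)/4) ≤ (1 - 1/4 : ℝ)⁻¹ := aux_exp_le (by norm_num)
        _ = 4/3 := by norm_num
    have h43 : (1.25:ℝ) / δ ≤ 4 / 3 := h125.trans he4
    rw [div_le_iff₀ hδ0] at h43
    linarith

lemma aux_solveB {t2 δ g p s0 x1 x2 : ℝ} (ht20 : 0 ≤ t2) (ht240 : t2 ≤ 1 / 40)
    (hδ15 : 15 / 16 ≤ δ) (hx10 : 0 ≤ x1) (hx20 : 0 ≤ x2)
    (hx12 : Real.exp (-(3 * t2 / 2)) * x1 ≤ x2) (hx1x2 : x1 + x2 ≤ 1 / 2)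
    (hs0 : s0 ≤ Real.exp (t2 / 2) * x1) (hp : p ≤ 1 / 2) (hg : g ≤ p + s0) : g ≤ δ := by
  have hE1 : Real.exp (t2 / 2) ≤ 80 / 79 := by
    calc Real.exp (t2 / 2) ≤ (1 - t2 / 2)⁻¹ := aux_exp_le (by linarith)
      _ ≤ ((79:ℝ) / 80)⁻¹ := by
          apply inv_anti₀ (by norm_num)
          linarith
      _ = 80 / 79 := by norm_num
  have hE3 : Real.exp (3 * t2 / 2) ≤ 80 / 77 := by
    calc Real.exp (3 * t2 / 2) ≤ (1 - 3 * t2 / 2)⁻¹ := aux_exp_le (by linarith)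
      _ ≤ ((77:ℝ) / 80)⁻¹ := by
          apply inv_anti₀ (by norm_num)
          linarith
      _ = 80 / 77 := by norm_num
  have hinv3 : (77:ℝ) / 80 ≤ Real.exp (-(3 * t2 / 2)) := by
    rw [Real.exp_neg]
    calc (77:ℝ)/80 = ((80:ℝ)/77)⁻¹ := by norm_num
      _ ≤ (Real.exp (3 * t2 / 2))⁻¹ := inv_anti₀ (Real.exp_pos _) hE3
  have hx1b : x1 ≤ 40 / 157 := by
    have h1 : (77:ℝ)/80 * x1 ≤ x2 :=
      le_trans (mul_le_mul_of_nonneg_right hinv3 hx10) hx12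
    linarith
  have hs0' : s0 ≤ (80/79 : ℝ) * (40/157) := by
    calc s0 ≤ Real.exp (t2 / 2) * x1 := hs0
      _ ≤ (80/79) * x1 := mul_le_mul_of_nonneg_right hE1 hx10
      _ ≤ (80/79) * (40/157) := by
          apply mul_le_mul_of_nonneg_left hx1b
          norm_num
  have : (80:ℝ)/79 * (40/157) ≤ 33/127 := by norm_num
  linarith

lemma aux_tail {k : ℕ} {σ ε δ c Δ : ℝ} (vv : Fin k → ℝ)
    (hσ0 : 0 < σ) (hε0 : 0 < ε) (hε1 : ε < 1) (hδ0 : 0 < δ) (hδ1 : δ < 1) (hΔ : 0 < Δ)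
    (hc : 0 < c) (hc2 : 2 * Real.log (1.25 / δ) < c ^ 2) (hcΔ : c * Δ ≤ σ * ε)
    (hD2 : 0 < ∑ j, vv j ^ 2) (hDΔ : Real.sqrt (∑ j, vv j ^ 2) ≤ Δ) :
    (Measure.pi fun _ : Fin k => gaussianReal 0 (σ ^ 2).toNNReal)
      {z | σ ^ 2 * ε - (∑ j, vv j ^ 2) / 2 < ∑ j, z j * vv j} ≤ ENNReal.ofReal δ := by
  have hv := aux_vne hσ0
  set ν := Measure.pi fun _ : Fin k => gaussianReal 0 (σ ^ 2).toNNReal with hν_def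
  set D2 := ∑ j, vv j ^ 2 with hD2_def
  set a := σ ^ 2 * ε - D2 / 2 with ha_def
  have hXm : Measurable fun z : Fin k → ℝ => ∑ j, z j * vv j := aux_meas_sum vv
  have hG : MeasurableSet {z : Fin k → ℝ | a < ∑ j, z j * vv j} :=
    measurableSet_lt measurable_const hXm
  set t2 := a ^ 2 / (σ ^ 2 * D2) with ht2_def
  have ht20 : 0 ≤ t2 := by positivity
  have hD2Δ2 : D2 ≤ Δ ^ 2 := by
    nlinarith [Real.sq_sqrt hD2.le, Real.sqrt_nonneg D2]
  have hfinG : ν {z : Fin k → ℝ | a < ∑ j, z j * vv j} ≠ ⊤ := measure_ne_top _ _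
  rcases le_or_gt 0 a with hca | hca
  · -- case a ≥ 0 : Chernoff with symmetry
    set κ := a / D2 with hκ_def
    have hκ0 : 0 ≤ κ := by positivity
    have hκD2 : κ * D2 = a := div_mul_cancel₀ _ (ne_of_gt hD2)
    have hm := aux_master' hσ0 vv κ hG
    have hset : {z : Fin k → ℝ | (fun j => z j + κ * vv j) ∈
        {z : Fin k → ℝ | a < ∑ j, z j * vv j}} = {z : Fin k → ℝ | 0 < ∑ j, z j * vv j} := by
      ext z
      simp only [Set.mem_setOf_eq]
      rw [aux_sum_shift vv κ z, ← hD2_def, hκD2]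
      constructor <;> intro h <;> linarith
    rw [hset] at hm
    have hlow : ENNReal.ofReal (Real.exp (t2 / 2)) * ν {z | a < ∑ j, z j * vv j} ≤ 2⁻¹ := by
      have hstep : ENNReal.ofReal (Real.exp (t2 / 2)) * ν {z | a < ∑ j, z j * vv j}
          ≤ ν {z : Fin k → ℝ | 0 < ∑ j, z j * vv j} := by
        rw [hm]
        calc ENNReal.ofReal (Real.exp (t2 / 2)) * ν {z | a < ∑ j, z j * vv j}
            = ∫⁻ _ in {z | a < ∑ j, z j * vv j}, ENNReal.ofReal (Real.exp (t2 / 2)) ∂ν := by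
              rw [setLIntegral_const]
          _ ≤ _ := by
              refine setLIntegral_mono (by fun_prop) fun z hz => ?_
              refine ENNReal.ofReal_le_ofReal (Real.exp_le_exp.mpr ?_)
              have hXz : a < ∑ j, z j * vv j := hz
              have hκa : κ * a = a ^ 2 / D2 := by rw [hκ_def]; field_simp
              have hκ2 : κ ^ 2 * D2 = a ^ 2 / D2 := by rw [hκ_def]; field_simp
              have h1 : a ^ 2 / D2 ≤ 2 * (κ * ∑ j, z j * vv j) - κ ^ 2 * D2 := by
                have := mul_le_mul_of_nonneg_left hXz.le hκ0
                nlinarith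
              have h2 : t2 / 2 = (a ^ 2 / D2) / (2 * σ ^ 2) := by
                rw [ht2_def, div_div, div_div]
                congr 1
                ring
              rw [h2, div_le_div_iff₀ (by positivity) (by positivity)]
              nlinarith [h1, sq_nonneg σ, hσ0]
      exact hstep.trans (aux_half hv vv)
    have hreal : Real.exp (t2 / 2) * (ν {z | a < ∑ j, z j * vv j}).toReal ≤ 1 / 2 := by
      have := aux_toReal_mul_le (Real.exp_pos _).le (by simp) hlow
      simpa using this
    -- numeric: (ν G).toReal ≤ δ
    have hcD2 : c ^ 2 * D2 ≤ σ ^ 2 * ε ^ 2 := by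
      have h0 : (c * Δ) ^ 2 ≤ (σ * ε) ^ 2 := by
        have := mul_self_le_mul_self (by positivity : (0:ℝ) ≤ c * Δ) hcΔ
        nlinarith
      nlinarith [mul_le_mul_of_nonneg_left hD2Δ2 (sq_nonneg c)]
    have ht2c : c ^ 2 - ε ≤ t2 := by
      rw [ht2_def, le_div_iff₀ (by positivity)]
      clear_value a D2
      have hprod : σ ^ 2 * (c ^ 2 * D2) ≤ σ ^ 2 * (σ ^ 2 * ε ^ 2) :=
        mul_le_mul_of_nonneg_left hcD2 (sq_nonneg σ)
      have ha2 : a ^ 2 = σ ^ 2 * σ ^ 2 * ε ^ 2 - σ ^ 2 * ε * D2 + D2 ^ 2 / 4 := by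
        rw [ha_def]; ring
      nlinarith [sq_nonneg D2]
    have h125 : (1.25 : ℝ) ≤ δ * Real.exp (c ^ 2 / 2) := by
      have hlg : Real.log (1.25 / δ) < c ^ 2 / 2 := by linarith
      have := Real.exp_le_exp.mpr hlg.le
      rw [Real.exp_log (by positivity : (0:ℝ) < 1.25 / δ)] at this
      rw [div_le_iff₀ hδ0] at this
      linarith
    have hexphalf : Real.exp ((1:ℝ) / 2) ≤ 5 / 2 := by
      have hsq : Real.exp ((1:ℝ) / 2) * Real.exp ((1:ℝ) / 2) = Real.exp 1 := by
        rw [← Real.exp_add]; norm_num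
      nlinarith [Real.exp_one_lt_d9, Real.exp_pos ((1:ℝ) / 2)]
    have h6 : (2 : ℝ) / 5 ≤ Real.exp (-(ε / 2)) := by
      have hmono : Real.exp (-((1:ℝ) / 2)) ≤ Real.exp (-(ε / 2)) :=
        Real.exp_le_exp.mpr (by linarith)
      have hmul : Real.exp (-((1:ℝ) / 2)) * Real.exp ((1:ℝ) / 2) = 1 := by
        rw [← Real.exp_add]; norm_num
      nlinarith [Real.exp_pos (-((1:ℝ) / 2))]
    have h8 : (1 : ℝ) / 2 ≤ δ * Real.exp (t2 / 2) := by
      have hsplit : Real.exp ((c ^ 2 - ε) / 2) = Real.exp (c ^ 2 / 2) * Real.exp (-(ε / 2)) := by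
        rw [show (c ^ 2 - ε) / 2 = c ^ 2 / 2 + -(ε / 2) from by ring, Real.exp_add]
      have h7 : (1 : ℝ) / 2 ≤ (δ * Real.exp (c ^ 2 / 2)) * Real.exp (-(ε / 2)) := by
        calc (1:ℝ)/2 = 1.25 * (2/5) := by norm_num
          _ ≤ _ := mul_le_mul h125 h6 (by norm_num) (by positivity)
      have hE : Real.exp ((c ^ 2 - ε) / 2) ≤ Real.exp (t2 / 2) :=
        Real.exp_le_exp.mpr (by linarith)
      calc (1:ℝ)/2 ≤ (δ * Real.exp (c ^ 2 / 2)) * Real.exp (-(ε / 2)) := h7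
        _ = δ * Real.exp ((c ^ 2 - ε) / 2) := by rw [mul_assoc, ← hsplit]
        _ ≤ δ * Real.exp (t2 / 2) := mul_le_mul_of_nonneg_left hE hδ0.le
    have hfinal : (ν {z | a < ∑ j, z j * vv j}).toReal ≤ δ := by
      have := hreal.trans h8
      rw [mul_comm δ _] at this
      exact le_of_mul_le_mul_left this (Real.exp_pos _)
    rw [← ENNReal.ofReal_toReal hfinG]
    exact ENNReal.ofReal_le_ofReal hfinal
  · -- case a < 0 : anti-concentration
    have hb : 0 < -a := by linarith
    set κ := -a / D2 with hκ_def
    have hκ0 : 0 < κ := div_pos hb hD2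
    have hκD2 : κ * D2 = -a := div_mul_cancel₀ _ (ne_of_gt hD2)
    have hκa : κ * -a = a ^ 2 / D2 := by rw [hκ_def]; field_simp
    have hκ2 : κ ^ 2 * D2 = a ^ 2 / D2 := by rw [hκ_def]; field_simp
    have ht2e : a ^ 2 / D2 = t2 * σ ^ 2 := by
      rw [ht2_def]; field_simp
    have hQ1m : MeasurableSet {z : Fin k → ℝ | 0 < ∑ j, z j * vv j ∧ ∑ j, z j * vv j ≤ -a} := by
      rw [Set.setOf_and]
      exact (measurableSet_lt measurable_const hXm).inter (measurableSet_le hXm measurable_const)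
    have hQ2m : MeasurableSet {z : Fin k → ℝ | -a < ∑ j, z j * vv j ∧ ∑ j, z j * vv j ≤ -(2*a)} := by
      rw [Set.setOf_and]
      exact (measurableSet_lt measurable_const hXm).inter (measurableSet_le hXm measurable_const)
    -- νS0 ≤ e^{t2/2} νQ1
    have hm1 := aux_master' hσ0 vv κ hQ1m
    have hset1 : {z : Fin k → ℝ | (fun j => z j + κ * vv j) ∈
        {z : Fin k → ℝ | 0 < ∑ j, z j * vv j ∧ ∑ j, z j * vv j ≤ -a}}
        = {z : Fin k → ℝ | a < ∑ j, z j * vv j ∧ ∑ j, z j * vv j ≤ 0} := by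
      ext z
      simp only [Set.mem_setOf_eq]
      rw [aux_sum_shift vv κ z, ← hD2_def, hκD2]
      constructor <;> intro h <;> exact ⟨by linarith [h.1], by linarith [h.2]⟩
    rw [hset1] at hm1
    have hS0le : ν {z : Fin k → ℝ | a < ∑ j, z j * vv j ∧ ∑ j, z j * vv j ≤ 0}
        ≤ ENNReal.ofReal (Real.exp (t2 / 2))
          * ν {z : Fin k → ℝ | 0 < ∑ j, z j * vv j ∧ ∑ j, z j * vv j ≤ -a} := by
      rw [hm1]
      calc ∫⁻ z in {z : Fin k → ℝ | 0 < ∑ j, z j * vv j ∧ ∑ j, z j * vv j ≤ -a},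
            ENNReal.ofReal (Real.exp
              ((2 * (κ * ∑ j, z j * vv j) - κ ^ 2 * ∑ j, vv j ^ 2) / (2 * σ ^ 2))) ∂ν
          ≤ ∫⁻ _ in {z : Fin k → ℝ | 0 < ∑ j, z j * vv j ∧ ∑ j, z j * vv j ≤ -a},
            ENNReal.ofReal (Real.exp (t2 / 2)) ∂ν := by
            refine setLIntegral_mono (by fun_prop) fun z hz => ?_
            refine ENNReal.ofReal_le_ofReal (Real.exp_le_exp.mpr ?_)
            have hz2 : ∑ j, z j * vv j ≤ -a := hz.2
            have h1 : 2 * (κ * ∑ j, z j * vv j) - κ ^ 2 * D2 ≤ a ^ 2 / D2 := by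
              have := mul_le_mul_of_nonneg_left hz2 hκ0.le
              nlinarith
            rw [← hD2_def, div_le_div_iff₀ (by positivity) (by positivity)]
            nlinarith [h1, ht2e, sq_nonneg σ, hσ0, mul_pos (mul_pos hσ0 hσ0) hD2]
        _ = ENNReal.ofReal (Real.exp (t2 / 2))
            * ν {z : Fin k → ℝ | 0 < ∑ j, z j * vv j ∧ ∑ j, z j * vv j ≤ -a} := by
            rw [setLIntegral_const]
    -- νQ2 ≥ e^{-3t2/2} νQ1
    have hm2 := aux_master' hσ0 vv (-κ) hQ1m
    have hset2 : {z : Fin k → ℝ | (fun j => z j + -κ * vv j) ∈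
        {z : Fin k → ℝ | 0 < ∑ j, z j * vv j ∧ ∑ j, z j * vv j ≤ -a}}
        = {z : Fin k → ℝ | -a < ∑ j, z j * vv j ∧ ∑ j, z j * vv j ≤ -(2*a)} := by
      ext z
      simp only [Set.mem_setOf_eq]
      rw [aux_sum_shift vv (-κ) z, ← hD2_def]
      have : -κ * D2 = a := by rw [neg_mul, hκD2]; ring
      rw [this]
      constructor <;> intro h <;> exact ⟨by linarith [h.1], by linarith [h.2]⟩
    rw [hset2] at hm2
    have hQ2ge : ENNReal.ofReal (Real.exp (-(3 * t2 / 2)))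
          * ν {z : Fin k → ℝ | 0 < ∑ j, z j * vv j ∧ ∑ j, z j * vv j ≤ -a}
        ≤ ν {z : Fin k → ℝ | -a < ∑ j, z j * vv j ∧ ∑ j, z j * vv j ≤ -(2*a)} := by
      rw [hm2]
      calc ENNReal.ofReal (Real.exp (-(3 * t2 / 2)))
            * ν {z : Fin k → ℝ | 0 < ∑ j, z j * vv j ∧ ∑ j, z j * vv j ≤ -a}
          = ∫⁻ _ in {z : Fin k → ℝ | 0 < ∑ j, z j * vv j ∧ ∑ j, z j * vv j ≤ -a},
            ENNReal.ofReal (Real.exp (-(3 * t2 / 2))) ∂ν := by rw [setLIntegral_const]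
        _ ≤ _ := by
            refine setLIntegral_mono (by fun_prop) fun z hz => ?_
            refine ENNReal.ofReal_le_ofReal (Real.exp_le_exp.mpr ?_)
            have hz2 : ∑ j, z j * vv j ≤ -a := hz.2
            have h1 : -(3 * (a ^ 2 / D2)) ≤ 2 * (-κ * ∑ j, z j * vv j) - (-κ) ^ 2 * D2 := by
              have := mul_le_mul_of_nonneg_left hz2 hκ0.le
              nlinarith
            rw [← hD2_def, le_div_iff₀ (by positivity)]
            nlinarith [h1, ht2e, sq_nonneg σ, hσ0, mul_pos (mul_pos hσ0 hσ0) hD2]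
    -- νQ1 + νQ2 ≤ νP ≤ 1/2
    have hdisj : Disjoint {z : Fin k → ℝ | 0 < ∑ j, z j * vv j ∧ ∑ j, z j * vv j ≤ -a}
        {z : Fin k → ℝ | -a < ∑ j, z j * vv j ∧ ∑ j, z j * vv j ≤ -(2*a)} := by
      rw [Set.disjoint_left]
      rintro z ⟨_, h2⟩ ⟨h3, _⟩
      linarith
    have hsumP : ν {z : Fin k → ℝ | 0 < ∑ j, z j * vv j ∧ ∑ j, z j * vv j ≤ -a}
        + ν {z : Fin k → ℝ | -a < ∑ j, z j * vv j ∧ ∑ j, z j * vv j ≤ -(2*a)} ≤ 2⁻¹ := by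
      rw [← measure_union hdisj hQ2m]
      refine le_trans (measure_mono ?_) (aux_half hv vv)
      rintro z (⟨h1, _⟩ | ⟨h1, _⟩)
      · exact h1
      · simp only [Set.mem_setOf_eq]; linarith
    -- G ⊆ P ∪ S0
    have hGsub : ν {z : Fin k → ℝ | a < ∑ j, z j * vv j}
        ≤ ν {z : Fin k → ℝ | 0 < ∑ j, z j * vv j}
          + ν {z : Fin k → ℝ | a < ∑ j, z j * vv j ∧ ∑ j, z j * vv j ≤ 0} := by
      refine le_trans (measure_mono ?_) (measure_union_le _ _)
      intro z hz
      rcases le_or_gt (∑ j, z j * vv j) 0 with h | h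
      · exact Or.inr ⟨hz, h⟩
      · exact Or.inl h
    -- to real numbers
    set x1 := (ν {z : Fin k → ℝ | 0 < ∑ j, z j * vv j ∧ ∑ j, z j * vv j ≤ -a}).toReal with hx1_def
    set x2 := (ν {z : Fin k → ℝ | -a < ∑ j, z j * vv j ∧ ∑ j, z j * vv j ≤ -(2*a)}).toReal with hx2_def
    have hx10 : 0 ≤ x1 := ENNReal.toReal_nonneg
    have hx20 : 0 ≤ x2 := ENNReal.toReal_nonneg
    have hx12 : Real.exp (-(3 * t2 / 2)) * x1 ≤ x2 :=
      aux_toReal_mul_le (Real.exp_pos _).le (measure_ne_top _ _) hQ2ge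
    have hx1x2 : x1 + x2 ≤ 1 / 2 := by
      have h := ENNReal.toReal_mono (by simp) hsumP
      rw [ENNReal.toReal_add (measure_ne_top _ _) (measure_ne_top _ _)] at h
      simpa using h
    have hs0 : (ν {z : Fin k → ℝ | a < ∑ j, z j * vv j ∧ ∑ j, z j * vv j ≤ 0}).toReal
        ≤ Real.exp (t2 / 2) * x1 :=
      aux_le_toReal_mul (Real.exp_pos _).le (measure_ne_top _ _) hS0le
    have hp : (ν {z : Fin k → ℝ | 0 < ∑ j, z j * vv j}).toReal ≤ 1 / 2 := by
      have h := ENNReal.toReal_mono (by simp) (aux_half hv vv)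
      simpa using h
    have hg : (ν {z : Fin k → ℝ | a < ∑ j, z j * vv j}).toReal
        ≤ (ν {z : Fin k → ℝ | 0 < ∑ j, z j * vv j}).toReal
          + (ν {z : Fin k → ℝ | a < ∑ j, z j * vv j ∧ ∑ j, z j * vv j ≤ 0}).toReal := by
      refine le_trans (ENNReal.toReal_mono ?_ hGsub) ?_
      · exact ENNReal.add_ne_top.mpr ⟨measure_ne_top _ _, measure_ne_top _ _⟩
      · rw [ENNReal.toReal_add (measure_ne_top _ _) (measure_ne_top _ _)]
    -- numeric bounds
    obtain ⟨ht240, hδ15⟩ := aux_numB hσ0 hε0 hε1 hδ0 hδ1 hΔ hc hc2 hcΔ hD2 hDΔ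
      (by rw [← ha_def]; exact hca)
    rw [← ha_def, ← ht2_def] at ht240
    have hfinal : (ν {z : Fin k → ℝ | a < ∑ j, z j * vv j}).toReal ≤ δ :=
      aux_solveB ht20 ht240 hδ15 hx10 hx20 hx12 hx1x2 hs0 hp hg
    rw [← ENNReal.ofReal_toReal hfinG]
    exact ENNReal.ofReal_le_ofReal hfinal

lemma aux_main {k : ℕ} {σ ε δ c Δ : ℝ} (fx fy : Fin k → ℝ)
    (hσ0 : 0 < σ) (hε0 : 0 < ε) (hε1 : ε < 1) (hδ0 : 0 < δ) (hδ1 : δ < 1) (hΔ : 0 < Δ)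
    (hc : 0 < c) (hc2 : 2 * Real.log (1.25 / δ) < c ^ 2) (hcΔ : c * Δ ≤ σ * ε)
    (hDΔ : Real.sqrt (∑ j, (fx j - fy j) ^ 2) ≤ Δ)
    {S : Set (Fin k → ℝ)} (hS : MeasurableSet S) :
    (Measure.pi fun _ : Fin k => gaussianReal 0 (σ ^ 2).toNNReal).map (fun z => fx + z) S
      ≤ ENNReal.ofReal (Real.exp ε)
          * (Measure.pi fun _ : Fin k => gaussianReal 0 (σ ^ 2).toNNReal).map
              (fun z => fy + z) S
        + ENNReal.ofReal δ := by
  have hmeasadd : ∀ g : Fin k → ℝ, Measurable fun z : Fin k → ℝ => g + z :=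
    fun g => measurable_pi_lambda _ fun j => by simp only [Pi.add_apply]; fun_prop
  rw [Measure.map_apply (hmeasadd fx) hS, Measure.map_apply (hmeasadd fy) hS]
  by_cases hfxy : fx = fy
  · rw [hfxy]
    refine le_trans ?_ le_self_add
    nth_rewrite 1 [← one_mul ((Measure.pi fun _ : Fin k => gaussianReal 0 (σ ^ 2).toNNReal)
      ((fun z => fy + z) ⁻¹' S))]
    exact mul_le_mul_left (by
      rw [← ENNReal.ofReal_one]
      exact ENNReal.ofReal_le_ofReal (Real.one_le_exp hε0.le)) _
  · set ν := Measure.pi fun _ : Fin k => gaussianReal 0 (σ ^ 2).toNNReal with hν_def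
    set vv : Fin k → ℝ := fun j => fx j - fy j with hvv_def
    have hD2 : 0 < ∑ j, vv j ^ 2 := by
      have hex : ∃ j, vv j ≠ 0 := by
        by_contra h
        push_neg at h
        exact hfxy (funext fun j => by have := h j; rw [hvv_def] at this; simpa [sub_eq_zero] using this)
      obtain ⟨j0, hj0⟩ := hex
      exact Finset.sum_pos' (fun j _ => sq_nonneg _)
        ⟨j0, Finset.mem_univ _, by positivity⟩
    have hT : MeasurableSet ((fun z : Fin k → ℝ => fx + z) ⁻¹' S) := hS.preimage (hmeasadd fx)
    have hXm : Measurable fun z : Fin k → ℝ => ∑ j, z j * vv j := aux_meas_sum vv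
    have hG : MeasurableSet {z : Fin k → ℝ |
        σ ^ 2 * ε - (∑ j, vv j ^ 2) / 2 < ∑ j, z j * vv j} :=
      measurableSet_lt measurable_const hXm
    -- step 2 : ν (T \ G) ≤ e^ε ν T'
    have hTset : {z : Fin k → ℝ | (fun j => z j + (-1) * vv j) ∈
        ((fun z : Fin k → ℝ => fx + z) ⁻¹' S)} = (fun z : Fin k → ℝ => fy + z) ⁻¹' S := by
      ext z
      simp only [Set.mem_setOf_eq, Set.mem_preimage]
      have heq : (fx + fun j => z j + (-1) * vv j) = fy + z := by
        funext j
        simp only [Pi.add_apply, hvv_def]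
        ring
      rw [heq]
    have hm := aux_master' hσ0 vv (-1) hT
    rw [hTset] at hm
    have hstep2 : ν ((fun z : Fin k → ℝ => fx + z) ⁻¹' S
          \ {z | σ ^ 2 * ε - (∑ j, vv j ^ 2) / 2 < ∑ j, z j * vv j})
        ≤ ENNReal.ofReal (Real.exp ε) * ν ((fun z : Fin k → ℝ => fy + z) ⁻¹' S) := by
      have hlow : ENNReal.ofReal (Real.exp (-ε)) * ν ((fun z : Fin k → ℝ => fx + z) ⁻¹' S
            \ {z | σ ^ 2 * ε - (∑ j, vv j ^ 2) / 2 < ∑ j, z j * vv j})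
          ≤ ν ((fun z : Fin k → ℝ => fy + z) ⁻¹' S) := by
        rw [hm]
        calc ENNReal.ofReal (Real.exp (-ε)) * ν ((fun z : Fin k → ℝ => fx + z) ⁻¹' S
              \ {z | σ ^ 2 * ε - (∑ j, vv j ^ 2) / 2 < ∑ j, z j * vv j})
            = ∫⁻ _ in (fun z : Fin k → ℝ => fx + z) ⁻¹' S
                \ {z | σ ^ 2 * ε - (∑ j, vv j ^ 2) / 2 < ∑ j, z j * vv j},
                ENNReal.ofReal (Real.exp (-ε)) ∂ν := by rw [setLIntegral_const]
          _ ≤ ∫⁻ z in (fun z : Fin k → ℝ => fx + z) ⁻¹' S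
                \ {z | σ ^ 2 * ε - (∑ j, vv j ^ 2) / 2 < ∑ j, z j * vv j},
                ENNReal.ofReal (Real.exp
                  ((2 * ((-1) * ∑ j, z j * vv j) - (-1) ^ 2 * ∑ j, vv j ^ 2)
                    / (2 * σ ^ 2))) ∂ν := by
              refine setLIntegral_mono (by fun_prop) fun z hz => ?_
              refine ENNReal.ofReal_le_ofReal (Real.exp_le_exp.mpr ?_)
              have hzG : ¬ (σ ^ 2 * ε - (∑ j, vv j ^ 2) / 2 < ∑ j, z j * vv j) := hz.2
              push_neg at hzG
              rw [le_div_iff₀ (by positivity)]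
              nlinarith [hzG]
          _ ≤ ∫⁻ z in (fun z : Fin k → ℝ => fx + z) ⁻¹' S,
                ENNReal.ofReal (Real.exp
                  ((2 * ((-1) * ∑ j, z j * vv j) - (-1) ^ 2 * ∑ j, vv j ^ 2)
                    / (2 * σ ^ 2))) ∂ν := lintegral_mono_set Set.diff_subset
      calc ν ((fun z : Fin k → ℝ => fx + z) ⁻¹' S
              \ {z | σ ^ 2 * ε - (∑ j, vv j ^ 2) / 2 < ∑ j, z j * vv j})
          = ENNReal.ofReal (Real.exp ε) * (ENNReal.ofReal (Real.exp (-ε))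
              * ν ((fun z : Fin k → ℝ => fx + z) ⁻¹' S
                \ {z | σ ^ 2 * ε - (∑ j, vv j ^ 2) / 2 < ∑ j, z j * vv j})) := by
            rw [← mul_assoc, ← ENNReal.ofReal_mul (Real.exp_pos ε).le, ← Real.exp_add]
            simp
        _ ≤ ENNReal.ofReal (Real.exp ε) * ν ((fun z : Fin k → ℝ => fy + z) ⁻¹' S) :=
            mul_le_mul_right hlow _
    -- step 3 : tail bound
    have hstep3 := aux_tail vv hσ0 hε0 hε1 hδ0 hδ1 hΔ hc hc2 hcΔ hD2
      (by simpa only [hvv_def] using hDΔ)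
    calc ν ((fun z : Fin k → ℝ => fx + z) ⁻¹' S)
        = ν ((fun z : Fin k → ℝ => fx + z) ⁻¹' S
              ∩ {z | σ ^ 2 * ε - (∑ j, vv j ^ 2) / 2 < ∑ j, z j * vv j})
          + ν ((fun z : Fin k → ℝ => fx + z) ⁻¹' S
              \ {z | σ ^ 2 * ε - (∑ j, vv j ^ 2) / 2 < ∑ j, z j * vv j}) :=
          (measure_inter_add_diff _ hG).symm
      _ ≤ ENNReal.ofReal δ + ENNReal.ofReal (Real.exp ε)
            * ν ((fun z : Fin k → ℝ => fy + z) ⁻¹' S) :=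
          add_le_add ((measure_mono Set.inter_subset_right).trans hstep3) hstep2
      _ = _ := add_comm _ _


end auxGM

/-- **The Gaussian mechanism is `(ε, δ)`-differentially private.** Let `ε, δ ∈ (0,1)` and
let `f : ℕ^𝒳 → ℝ^k` have ℓ2 global sensitivity (over neighboring databases) at most
`Δ > 0`. Let `c > 0` satisfy `c² > 2 ln(1.25/δ)` and let `σ ≥ c Δ / ε`. Then the Gaussian
mechanism with standard deviation `σ` is `(ε, δ)`-differentially private. -/
theorem gaussianMechanism_isDP {𝒳 : Type*} [DecidableEq 𝒳] {k : ℕ}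
    (f : (𝒳 →₀ ℕ) → (Fin k → ℝ)) (ε δ Δ c σ : ℝ)
    (hε0 : 0 < ε) (hε1 : ε < 1) (hδ0 : 0 < δ) (hδ1 : δ < 1) (hΔ : 0 < Δ)
    (hsens : ∀ x y : 𝒳 →₀ ℕ, Neighboring x y →
      Real.sqrt (∑ j, (f x j - f y j) ^ 2) ≤ Δ)
    (hc : 0 < c) (hc2 : 2 * Real.log (1.25 / δ) < c ^ 2)
    (hσ : c * Δ / ε ≤ σ) :
    IsDP (gaussianMechanism f σ) ε δ := by
  intro x y hxy S hS
  have hσ0 : 0 < σ := lt_of_lt_of_le (by positivity) hσ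
  have hcΔ : c * Δ ≤ σ * ε := by
    rw [div_le_iff₀ hε0] at hσ
    linarith
  simp only [gaussianMechanism]
  exact aux_main (f x) (f y) hσ0 hε0 hε1 hδ0 hδ1 hΔ hc hc2 hcΔ (hsens x y hxy) hS
end

section
/- Sensitivity of regularized empirical risk minimization: Fix n ∈ ℕ, λ > 0, a regularizer N : ℝ^d → ℝ that is differentiable and 1-strongly convex, and a loss ℓ : ℝ → [0,∞) that is convex and differentiable with |ℓ'(z)| ≤ 1 for all z ∈ ℝ. For a training set D = {(x_i, y_i)}_{i=1}^n with x_i ∈ ℝ^d, ‖x_i‖₂ ≤ 1, and y_i ∈ {−1, +1}, let f(D) = argmin_{w ∈ ℝ^d} [ (1/n) ∑_{i=1}^n ℓ(y_i · ⟨w, x_i⟩) + λ·N(w) ] (which exists and is unique by strong convexity). Then for any two training sets D and D' of size n differing in a single example, ‖f(D) − f(D')‖₂ ≤ 2/(n·λ). -/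
open MeasureTheory

section Aux

variable {E : Type*} [NormedAddCommGroup E] [InnerProductSpace ℝ E]

/-- convexity of a finite sum of convex functions -/
lemma my_convexOn_sum {ι : Type*} (t : Finset ι) (f : ι → E → ℝ)
    (h : ∀ i ∈ t, ConvexOn ℝ Set.univ (f i)) :
    ConvexOn ℝ Set.univ (fun u => ∑ i ∈ t, f i u) := by
  classical
  induction t using Finset.cons_induction with
  | empty => simpa using convexOn_const 0 convex_univ
  | cons i s hi ih =>
    simp only [Finset.sum_cons]
    exact (h i (Finset.mem_cons_self i s)).add
      (ih fun j hj => h j (Finset.mem_cons_of_mem hj))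

/-- quadratic identity -/
lemma my_norm_identity (u v : E) (t : ℝ) :
    (1 - t) * ‖u‖ ^ 2 + t * ‖v‖ ^ 2 - ‖(1 - t) • u + t • v‖ ^ 2
      = t * (1 - t) * ‖u - v‖ ^ 2 := by
  have h1 := real_inner_self_eq_norm_sq ((1 - t) • u + t • v)
  have h2 := real_inner_self_eq_norm_sq (u - v)
  have h3 := real_inner_self_eq_norm_sq u
  have h4 := real_inner_self_eq_norm_sq v
  simp only [inner_add_add_self, inner_sub_sub_self, real_inner_smul_left,
    real_inner_smul_right] at h1 h2
  rw [← h3, ← h4, ← h1, ← h2]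
  have hc : (inner ℝ u v : ℝ) = inner ℝ v u := real_inner_comm v u
  rw [hc]; ring

/-- strong convexity minimizer inequality -/
lemma my_min_ineq (f : E → ℝ) (c : ℝ) (hc : 0 < c)
    (hsc : ConvexOn ℝ Set.univ (fun u => f u - (c / 2) * ‖u‖ ^ 2))
    (w : E) (hw : ∀ u, f w ≤ f u) (u : E) :
    f w + (c / 2) * ‖w - u‖ ^ 2 ≤ f u := by
  have key : ∀ t : ℝ, t ∈ Set.Ioo (0 : ℝ) 1 →
      f w + (c / 2) * (1 - t) * ‖w - u‖ ^ 2 ≤ f u := by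
    intro t ht
    obtain ⟨ht0, ht1⟩ := ht
    have hconv := hsc.2 (Set.mem_univ w) (Set.mem_univ u)
      (by linarith : (0:ℝ) ≤ 1 - t) ht0.le (by ring)
    have hid := my_norm_identity w u t
    have hmin := hw ((1 - t) • w + t • u)
    have h := hconv
    simp only [smul_eq_mul] at h
    nlinarith [h, hid, hmin]
  have hlim : Filter.Tendsto
      (fun t : ℝ => f w + (c / 2) * (1 - t) * ‖w - u‖ ^ 2)
      (nhdsWithin 0 (Set.Ioo (0:ℝ) 1)) (nhds (f w + (c / 2) * ‖w - u‖ ^ 2)) := by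
    have : Filter.Tendsto
        (fun t : ℝ => f w + (c / 2) * (1 - t) * ‖w - u‖ ^ 2)
        (nhds 0) (nhds (f w + (c / 2) * (1 - 0) * ‖w - u‖ ^ 2)) := by
      apply Filter.Tendsto.add tendsto_const_nhds
      apply Filter.Tendsto.mul_const
      apply Filter.Tendsto.const_mul
      exact (continuous_const.sub continuous_id).tendsto 0
    simpa using this.mono_left nhdsWithin_le_nhds
  have hne : (nhdsWithin (0:ℝ) (Set.Ioo 0 1)).NeBot := left_nhdsWithin_Ioo_neBot one_pos
  exact le_of_tendsto hlim (Filter.eventually_mem_set.mpr self_mem_nhdsWithin |>.mono key)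

end Aux

/-- **Sensitivity of regularized empirical risk minimization (Chaudhuri–Monteleoni–Sarwate).**
With a differentiable 1-strongly convex regularizer `N`, a convex differentiable loss `ℓ`
with `|ℓ'| ≤ 1`, data points of norm at most 1, and labels in `{-1, +1}`, any two global
minimizers of the regularized empirical losses of two training sets of size `n` that differ
in a single example are at ℓ2 distance at most `2/(n λ)`. -/
theorem erm_sensitivity {d n : ℕ} (hn : 0 < n) (lam : ℝ) (hlam : 0 < lam)
    (N : EuclideanSpace ℝ (Fin d) → ℝ)
    (hNdiff : Differentiable ℝ N)
    (hNsc : ConvexOn ℝ Set.univ fun w => N w - (1 / 2) * ‖w‖ ^ 2)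
    (ℓ : ℝ → ℝ) (hℓ0 : ∀ z, 0 ≤ ℓ z)
    (hℓconv : ConvexOn ℝ Set.univ ℓ)
    (hℓdiff : Differentiable ℝ ℓ) (hℓ' : ∀ z, |deriv ℓ z| ≤ 1)
    (D D' : Fin n → EuclideanSpace ℝ (Fin d) × ℝ)
    (hD : ∀ i, ‖(D i).1‖ ≤ 1 ∧ ((D i).2 = -1 ∨ (D i).2 = 1))
    (hD' : ∀ i, ‖(D' i).1‖ ≤ 1 ∧ ((D' i).2 = -1 ∨ (D' i).2 = 1))
    (hneighbor : ∃ i₀ : Fin n, ∀ i, i ≠ i₀ → D i = D' i)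
    (J : (Fin n → EuclideanSpace ℝ (Fin d) × ℝ) → EuclideanSpace ℝ (Fin d) → ℝ)
    (hJ : ∀ T w, J T w =
      (1 / (n : ℝ)) * ∑ i, ℓ ((T i).2 * (inner ℝ w (T i).1 : ℝ)) + lam * N w)
    (w w' : EuclideanSpace ℝ (Fin d))
    (hw : ∀ u, J D w ≤ J D u) (hw' : ∀ u, J D' w' ≤ J D' u) :
    ‖w - w'‖ ≤ 2 / (n * lam) := by
  classical
  -- Lipschitz bound for the loss composite
  have hlip : ∀ (y : ℝ), (y = -1 ∨ y = 1) → ∀ (x : EuclideanSpace ℝ (Fin d)), ‖x‖ ≤ 1 → ∀ u v : EuclideanSpace ℝ (Fin d),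
      ℓ (y * (inner ℝ u x : ℝ)) - ℓ (y * (inner ℝ v x : ℝ)) ≤ ‖u - v‖ := by
    intro y hy x hx u v
    have hL : ‖ℓ (y * (inner ℝ u x : ℝ)) - ℓ (y * (inner ℝ v x : ℝ))‖ ≤
        1 * ‖y * (inner ℝ u x : ℝ) - y * (inner ℝ v x : ℝ)‖ := by
      apply Convex.norm_image_sub_le_of_norm_deriv_le (s := Set.univ)
        (fun z _ => hℓdiff z) (fun z _ => by simpa using hℓ' z) convex_univ
        (Set.mem_univ _) (Set.mem_univ _)
    have hy1 : |y| = 1 := by rcases hy with h | h <;> simp [h]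
    have hinner : y * (inner ℝ u x : ℝ) - y * (inner ℝ v x : ℝ)
        = y * (inner ℝ (u - v) x : ℝ) := by
      rw [inner_sub_left]; ring
    calc ℓ (y * (inner ℝ u x : ℝ)) - ℓ (y * (inner ℝ v x : ℝ))
        ≤ ‖ℓ (y * (inner ℝ u x : ℝ)) - ℓ (y * (inner ℝ v x : ℝ))‖ := le_abs_self _
      _ ≤ 1 * ‖y * (inner ℝ u x : ℝ) - y * (inner ℝ v x : ℝ)‖ := hL
      _ = |y| * |(inner ℝ (u - v) x : ℝ)| := by
          rw [hinner, one_mul, Real.norm_eq_abs, abs_mul]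
      _ ≤ 1 * (‖u - v‖ * ‖x‖) := by
          rw [hy1]; exact mul_le_mul_of_nonneg_left (abs_real_inner_le_norm _ _) one_pos.le
      _ ≤ ‖u - v‖ := by
          rw [one_mul]
          calc ‖u - v‖ * ‖x‖ ≤ ‖u - v‖ * 1 :=
                mul_le_mul_of_nonneg_left hx (norm_nonneg _)
            _ = ‖u - v‖ := mul_one _
  -- strong convexity of J T
  have hJsc : ∀ T : Fin n → EuclideanSpace ℝ (Fin d) × ℝ,
      ConvexOn ℝ Set.univ (fun u => J T u - (lam / 2) * ‖u‖ ^ 2) := by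
    intro T
    have heq : (fun u => J T u - (lam / 2) * ‖u‖ ^ 2) =
        (fun u => (1 / (n : ℝ)) * ∑ i, ℓ ((T i).2 * (inner ℝ u (T i).1 : ℝ))
          + lam * (N u - (1 / 2) * ‖u‖ ^ 2)) := by
      funext u; rw [hJ]; ring
    rw [heq]
    apply ConvexOn.add
    · have hsum : ConvexOn ℝ Set.univ
          (fun u : EuclideanSpace ℝ (Fin d) => ∑ i, ℓ ((T i).2 * (inner ℝ u (T i).1 : ℝ))) := by
        apply my_convexOn_sum
        intro i _
        constructor
        · exact convex_univ
        · intro u _ v _ a b ha hb hab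
          have hl : (T i).2 * (inner ℝ (a • u + b • v) ((T i).1) : ℝ)
              = a * ((T i).2 * (inner ℝ u (T i).1 : ℝ))
                + b * ((T i).2 * (inner ℝ v (T i).1 : ℝ)) := by
            rw [inner_add_left, real_inner_smul_left, real_inner_smul_left]; ring
          dsimp only
          rw [hl]
          have := hℓconv.2 (Set.mem_univ ((T i).2 * (inner ℝ u (T i).1 : ℝ)))
            (Set.mem_univ ((T i).2 * (inner ℝ v (T i).1 : ℝ))) ha hb hab
          simpa using this
      have := hsum.smul (c := 1 / (n : ℝ)) (by positivity)
      simpa [smul_eq_mul] using this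
    · have := hNsc.smul (c := lam) hlam.le
      simpa [smul_eq_mul] using this
  -- strong convexity minimizer inequalities
  have h1 := my_min_ineq (J D) lam hlam (hJsc D) w hw w'
  have h2 := my_min_ineq (J D') lam hlam (hJsc D') w' hw' w
  -- difference of the two objectives
  obtain ⟨i₀, hi₀⟩ := hneighbor
  have hdiff : ∀ u : EuclideanSpace ℝ (Fin d), J D u - J D' u =
      (1 / (n : ℝ)) * (ℓ ((D i₀).2 * (inner ℝ u (D i₀).1 : ℝ))
        - ℓ ((D' i₀).2 * (inner ℝ u (D' i₀).1 : ℝ))) := by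
    intro u
    rw [hJ, hJ]
    have : (∑ i, ℓ ((D i).2 * (inner ℝ u (D i).1 : ℝ)))
        - (∑ i, ℓ ((D' i).2 * (inner ℝ u (D' i).1 : ℝ)))
        = ∑ i, (ℓ ((D i).2 * (inner ℝ u (D i).1 : ℝ))
            - ℓ ((D' i).2 * (inner ℝ u (D' i).1 : ℝ))) := by
      rw [Finset.sum_sub_distrib]
    have hsingle : ∑ i, (ℓ ((D i).2 * (inner ℝ u (D i).1 : ℝ))
            - ℓ ((D' i).2 * (inner ℝ u (D' i).1 : ℝ)))
        = ℓ ((D i₀).2 * (inner ℝ u (D i₀).1 : ℝ))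
            - ℓ ((D' i₀).2 * (inner ℝ u (D' i₀).1 : ℝ)) := by
      apply Finset.sum_eq_single
      · intro i _ hi; rw [hi₀ i hi]; ring
      · intro h; exact absurd (Finset.mem_univ i₀) h
    rw [show (1 / (n : ℝ)) * (∑ i, ℓ ((D i).2 * (inner ℝ u (D i).1 : ℝ))) + lam * N u
        - ((1 / (n : ℝ)) * (∑ i, ℓ ((D' i).2 * (inner ℝ u (D' i).1 : ℝ))) + lam * N u)
        = (1 / (n : ℝ)) * ((∑ i, ℓ ((D i).2 * (inner ℝ u (D i).1 : ℝ)))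
            - (∑ i, ℓ ((D' i).2 * (inner ℝ u (D' i).1 : ℝ)))) from by ring,
      this, hsingle]
  -- combine
  have hkey : lam * ‖w - w'‖ ^ 2 ≤ (2 / (n : ℝ)) * ‖w - w'‖ := by
    have hcomb : lam * ‖w - w'‖ ^ 2 ≤ (J D w' - J D' w') + (J D' w - J D w) := by
      have hnorm : ‖w' - w‖ = ‖w - w'‖ := by rw [← norm_neg]; congr 1; abel
      have hnsq : ‖w' - w‖ ^ 2 = ‖w - w'‖ ^ 2 := by rw [hnorm]
      rw [hnsq] at h2
      linarith [h1, h2]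
    have hA : ℓ ((D i₀).2 * (inner ℝ w' (D i₀).1 : ℝ))
        - ℓ ((D i₀).2 * (inner ℝ w (D i₀).1 : ℝ)) ≤ ‖w' - w‖ :=
      hlip _ (hD i₀).2 _ (hD i₀).1 w' w
    have hB : ℓ ((D' i₀).2 * (inner ℝ w (D' i₀).1 : ℝ))
        - ℓ ((D' i₀).2 * (inner ℝ w' (D' i₀).1 : ℝ)) ≤ ‖w - w'‖ :=
      hlip _ (hD' i₀).2 _ (hD' i₀).1 w w'
    have hd1 := hdiff w'
    have hd2 := hdiff w
    have hnorm : ‖w' - w‖ = ‖w - w'‖ := by rw [← norm_neg]; congr 1; abel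
    have hnpos : (0:ℝ) < (n:ℝ) := Nat.cast_pos.mpr hn
    have hcalc : (J D w' - J D' w') + (J D' w - J D w)
        ≤ (2 / (n : ℝ)) * ‖w - w'‖ := by
      rw [show J D' w - J D w = -(J D w - J D' w) from by ring, hd1, hd2]
      rw [hnorm] at hA
      have h2n : (0:ℝ) ≤ 1 / (n:ℝ) := by positivity
      have hmul := mul_le_mul_of_nonneg_left (add_le_add hA hB) h2n
      have hexp : (1 / (n:ℝ)) * ((ℓ ((D i₀).2 * (inner ℝ w' (D i₀).1 : ℝ))
            - ℓ ((D i₀).2 * (inner ℝ w (D i₀).1 : ℝ)))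
          + (ℓ ((D' i₀).2 * (inner ℝ w (D' i₀).1 : ℝ))
            - ℓ ((D' i₀).2 * (inner ℝ w' (D' i₀).1 : ℝ))))
          = (1 / (n:ℝ)) * (ℓ ((D i₀).2 * (inner ℝ w' (D i₀).1 : ℝ))
            - ℓ ((D' i₀).2 * (inner ℝ w' (D' i₀).1 : ℝ)))
          + -((1 / (n:ℝ)) * (ℓ ((D i₀).2 * (inner ℝ w (D i₀).1 : ℝ))
            - ℓ ((D' i₀).2 * (inner ℝ w (D' i₀).1 : ℝ)))) := by ring
      have hrhs : (1 / (n:ℝ)) * (‖w - w'‖ + ‖w - w'‖) = 2 / (n:ℝ) * ‖w - w'‖ := by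
        ring
      rw [hexp, hrhs] at hmul
      linarith [hmul]
    linarith
  rcases eq_or_lt_of_le (norm_nonneg (w - w')) with h0 | h0
  · rw [← h0]; positivity
  · have hnpos : (0:ℝ) < (n:ℝ) := Nat.cast_pos.mpr hn
    have : lam * ‖w - w'‖ ≤ 2 / (n : ℝ) := by
      have := mul_le_mul_of_nonneg_right hkey (le_of_lt (inv_pos.mpr h0))
      rw [pow_two] at this
      field_simp at this ⊢
      nlinarith [hkey, h0]
    rw [div_mul_eq_mul_div, le_div_iff₀ hnpos] at hkey
    rw [le_div_iff₀ (by positivity : (0:ℝ) < (n:ℝ) * lam)]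
    nlinarith [hkey, h0]
end

section
/- Output perturbation for regularized ERM is ε-differentially private (Chaudhuri–Monteleoni–Sarwate): Fix n ∈ ℕ, λ > 0, ε > 0, a regularizer N : ℝ^d → ℝ that is differentiable and 1-strongly convex, and a loss ℓ : ℝ → [0,∞) that is convex and differentiable with |ℓ'(z)| < 1 for all z ∈ ℝ. Consider the mechanism M that, on a training set D = {(x_i, y_i)}_{i=1}^n with ‖x_i‖₂ ≤ 1 and y_i ∈ {−1,+1}, outputs f_priv = argmin_{w} [ (1/n) ∑_{i=1}^n ℓ(y_i·⟨w, x_i⟩) + λ·N(w) ] + b, where b ∈ ℝ^d is a random noise vector with probability density proportional to exp(−β‖b‖₂) for β = nλε/2. Then for any two training sets D, D' of size n differing in a single example and every measurable S ⊆ ℝ^d, Pr[M(D) ∈ S] ≤ e^ε · Pr[M(D') ∈ S]; i.e., M is ε-differentially private with respect to neighboring training sets. -/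
open MeasureTheory
open scoped RealInnerProductSpace
set_option maxHeartbeats 1000000

/-- Quadratic growth at a global minimizer of a strongly convex function. -/
lemma quad_growth_aux {E : Type*} [NormedAddCommGroup E] [InnerProductSpace ℝ E]
    (c : ℝ) (hc : 0 < c) (f : E → ℝ)
    (hconv : ConvexOn ℝ Set.univ fun w => f w - c / 2 * ‖w‖ ^ 2)
    (w u : E) (hmin : ∀ z, f w ≤ f z) :
    f w + c / 2 * ‖u - w‖ ^ 2 ≤ f u := by
  set Q : ℝ := ‖u - w‖ ^ 2 with hQ
  have hQ0 : 0 ≤ Q := by positivity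
  -- key inequality for every t ∈ (0,1)
  have key : ∀ t : ℝ, 0 < t → t < 1 → c / 2 * (1 - t) * Q ≤ f u - f w := by
    intro t ht0 ht1
    have ha : (0:ℝ) ≤ 1 - t := by linarith
    have hb : (0:ℝ) ≤ t := ht0.le
    have hab : (1 - t) + t = 1 := by ring
    have hcv := hconv.2 (Set.mem_univ w) (Set.mem_univ u) ha hb hab
    simp only [smul_eq_mul] at hcv
    -- norm identity
    have hni : ‖(1 - t) • w + t • u‖ ^ 2
        = (1 - t) * ‖w‖ ^ 2 + t * ‖u‖ ^ 2 - t * (1 - t) * Q := by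
      have hc2 : (1 - t) • w + t • u = w + t • (u - w) := by
        rw [sub_smul, one_smul, smul_sub]; abel
      have e1 : ‖w + t • (u - w)‖ ^ 2
          = ‖w‖ ^ 2 + 2 * (t * ⟪w, u - w⟫) + t ^ 2 * ‖u - w‖ ^ 2 := by
        rw [norm_add_sq_real, real_inner_smul_right, norm_smul]
        rw [mul_pow, Real.norm_eq_abs, sq_abs]
      have e2 : ‖u‖ ^ 2 = ‖w‖ ^ 2 + 2 * ⟪w, u - w⟫ + ‖u - w‖ ^ 2 := by
        have h := norm_add_sq_real w (u - w)
        rw [show w + (u - w) = u by abel] at h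
        linarith [h]
      rw [hQ, hc2, e1]
      linear_combination (-t) * e2
    have hmin' := hmin ((1 - t) • w + t • u)
    rw [hni] at hcv
    have step : c / 2 * (1 - t) * Q * t ≤ (f u - f w) * t := by nlinarith [hcv, hmin']
    exact le_of_mul_le_mul_right step ht0
  -- take t → 0
  have lim : ∀ δ : ℝ, 0 < δ → f w + c / 2 * Q ≤ f u + δ := by
    intro δ hδ
    set t : ℝ := min (1/2) (δ / (c / 2 * Q + 1)) with htdef
    have hden : 0 < c / 2 * Q + 1 := by positivity
    have ht0 : 0 < t := lt_min (by norm_num) (by positivity)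
    have ht1 : t < 1 := lt_of_le_of_lt (min_le_left _ _) (by norm_num)
    have hkey := key t ht0 ht1
    have htle : t ≤ δ / (c / 2 * Q + 1) := min_le_right _ _
    have h2 : t * (c / 2 * Q) ≤ δ := by
      have := mul_le_mul_of_nonneg_right htle (by positivity : (0:ℝ) ≤ c / 2 * Q)
      calc t * (c / 2 * Q) ≤ δ / (c / 2 * Q + 1) * (c / 2 * Q) := this
        _ ≤ δ := by
          rw [div_mul_eq_mul_div, div_le_iff₀ hden]
          nlinarith
    nlinarith [hkey, h2]
  exact le_of_forall_pos_le_add lim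

/-- **Output perturbation for regularized ERM is `ε`-differentially private
(Chaudhuri–Monteleoni–Sarwate).** The mechanism outputs
`argmin_w [(1/n) ∑ ℓ(yᵢ ⟪w, xᵢ⟫) + λ N(w)] + b`, where `b` is drawn with density
proportional to `exp (-β ‖b‖₂)` with `β = n λ ε / 2`. Under the stated conditions it is
`ε`-differentially private with respect to training sets differing in one example. -/
theorem output_perturbation_dp {d n : ℕ} (hn : 0 < n) (lam ε : ℝ)
    (hlam : 0 < lam) (hε : 0 < ε)
    (N : EuclideanSpace ℝ (Fin d) → ℝ)
    (hNdiff : Differentiable ℝ N)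
    (hNsc : ConvexOn ℝ Set.univ fun w => N w - (1 / 2) * ‖w‖ ^ 2)
    (ℓ : ℝ → ℝ) (hℓ0 : ∀ z, 0 ≤ ℓ z)
    (hℓconv : ConvexOn ℝ Set.univ ℓ)
    (hℓdiff : Differentiable ℝ ℓ) (hℓ' : ∀ z, |deriv ℓ z| < 1)
    -- the regularized empirical loss
    (J : (Fin n → EuclideanSpace ℝ (Fin d) × ℝ) → EuclideanSpace ℝ (Fin d) → ℝ)
    (hJ : ∀ T w, J T w =
      (1 / (n : ℝ)) * ∑ i, ℓ ((T i).2 * (inner ℝ w (T i).1 : ℝ)) + lam * N w)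
    -- the (unique) ERM minimizer of `J T`
    (fmin : (Fin n → EuclideanSpace ℝ (Fin d) × ℝ) → EuclideanSpace ℝ (Fin d))
    (hfmin : ∀ T, ∀ u, J T (fmin T) ≤ J T u)
    -- the noise parameter and normalizing constant of the noise density
    (β C : ℝ) (hβ : β = n * lam * ε / 2)
    (hC : C = ∫ b : EuclideanSpace ℝ (Fin d), Real.exp (-(β * ‖b‖)))
    -- the output-perturbation mechanism
    (M : (Fin n → EuclideanSpace ℝ (Fin d) × ℝ) → Measure (EuclideanSpace ℝ (Fin d)))
    (hM : ∀ T, M T =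
      (volume.withDensity fun b => ENNReal.ofReal ((1 / C) * Real.exp (-(β * ‖b‖)))).map
        fun b => fmin T + b)
    -- neighboring valid training sets
    (D D' : Fin n → EuclideanSpace ℝ (Fin d) × ℝ)
    (hD : ∀ i, ‖(D i).1‖ ≤ 1 ∧ ((D i).2 = -1 ∨ (D i).2 = 1))
    (hD' : ∀ i, ‖(D' i).1‖ ≤ 1 ∧ ((D' i).2 = -1 ∨ (D' i).2 = 1))
    (hneighbor : ∃ i₀ : Fin n, ∀ i, i ≠ i₀ → D i = D' i) :
    ∀ S : Set (EuclideanSpace ℝ (Fin d)), MeasurableSet S →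
      M D S ≤ ENNReal.ofReal (Real.exp ε) * M D' S := by
  classical
  obtain ⟨i₀, hi₀⟩ := hneighbor
  have hnR : (0:ℝ) < n := by exact_mod_cast hn
  -- ℓ is 1-Lipschitz
  have hℓlip : LipschitzWith 1 ℓ := by
    apply lipschitzWith_of_nnnorm_deriv_le hℓdiff
    intro x
    have := (hℓ' x).le
    rw [← NNReal.coe_le_coe]
    simpa [Real.norm_eq_abs] using this
  have hℓlip' : ∀ a b : ℝ, |ℓ a - ℓ b| ≤ |a - b| := by
    intro a b
    have := hℓlip.dist_le_mul a b
    simpa [Real.dist_eq] using this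
  -- per-example Lipschitz bound
  have hterm : ∀ (x : EuclideanSpace ℝ (Fin d)) (y : ℝ), ‖x‖ ≤ 1 → (y = -1 ∨ y = 1) →
      ∀ w₁ w₂ : EuclideanSpace ℝ (Fin d),
      |ℓ (y * (inner ℝ w₁ x : ℝ)) - ℓ (y * (inner ℝ w₂ x : ℝ))| ≤ ‖w₁ - w₂‖ := by
    intro x y hx hy w₁ w₂
    have hy1 : |y| = 1 := by rcases hy with h | h <;> simp [h]
    calc |ℓ (y * (inner ℝ w₁ x : ℝ)) - ℓ (y * (inner ℝ w₂ x : ℝ))|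
        ≤ |y * (inner ℝ w₁ x : ℝ) - y * (inner ℝ w₂ x : ℝ)| := hℓlip' _ _
      _ = |y| * |(inner ℝ (w₁ - w₂) x : ℝ)| := by
          rw [← abs_mul, inner_sub_left]; ring_nf
      _ ≤ 1 * (‖w₁ - w₂‖ * ‖x‖) := by
          rw [hy1, one_mul, one_mul]
          exact abs_real_inner_le_norm _ _
      _ ≤ ‖w₁ - w₂‖ := by
          rw [one_mul]
          calc ‖w₁ - w₂‖ * ‖x‖ ≤ ‖w₁ - w₂‖ * 1 :=
            mul_le_mul_of_nonneg_left hx (norm_nonneg _)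
          _ = ‖w₁ - w₂‖ := mul_one _
  -- strong convexity of J T
  have hsc : ∀ T, ConvexOn ℝ Set.univ fun w => J T w - lam / 2 * ‖w‖ ^ 2 := by
    intro T
    have hF : ConvexOn ℝ Set.univ
        fun w => (1 / (n : ℝ)) * ∑ i, ℓ ((T i).2 * (inner ℝ w (T i).1 : ℝ)) := by
      refine ⟨convex_univ, fun w _ u _ a b ha hb hab => ?_⟩
      simp only [smul_eq_mul]
      have hti : ∀ i : Fin n, ℓ ((T i).2 * (inner ℝ (a • w + b • u) (T i).1 : ℝ)) ≤
          a * ℓ ((T i).2 * (inner ℝ w (T i).1 : ℝ)) + b * ℓ ((T i).2 * (inner ℝ u (T i).1 : ℝ)) := by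
        intro i
        have h1 : (T i).2 * (inner ℝ (a • w + b • u) (T i).1 : ℝ)
            = a * ((T i).2 * (inner ℝ w (T i).1 : ℝ)) + b * ((T i).2 * (inner ℝ u (T i).1 : ℝ)) := by
          rw [inner_add_left, real_inner_smul_left, real_inner_smul_left]; ring
        rw [h1]
        have := hℓconv.2 (Set.mem_univ ((T i).2 * (inner ℝ w (T i).1 : ℝ)))
          (Set.mem_univ ((T i).2 * (inner ℝ u (T i).1 : ℝ))) ha hb hab
        simpa using this
      have hsum := Finset.sum_le_sum (fun i (_ : i ∈ Finset.univ) => hti i)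
      have hn' : (0:ℝ) ≤ 1 / (n : ℝ) := by positivity
      have := mul_le_mul_of_nonneg_left hsum hn'
      calc (1 / (n : ℝ)) * ∑ i, ℓ ((T i).2 * (inner ℝ (a • w + b • u) (T i).1 : ℝ))
          ≤ (1 / (n : ℝ)) * ∑ i, (a * ℓ ((T i).2 * (inner ℝ w (T i).1 : ℝ))
              + b * ℓ ((T i).2 * (inner ℝ u (T i).1 : ℝ))) := this
        _ = a * ((1 / (n : ℝ)) * ∑ i, ℓ ((T i).2 * (inner ℝ w (T i).1 : ℝ)))
              + b * ((1 / (n : ℝ)) * ∑ i, ℓ ((T i).2 * (inner ℝ u (T i).1 : ℝ))) := by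
            rw [Finset.sum_add_distrib, ← Finset.mul_sum, ← Finset.mul_sum]; ring
    have hN2 := hNsc.smul hlam.le
    have hadd := hF.add hN2
    have hfe : (fun w => J T w - lam / 2 * ‖w‖ ^ 2)
        = fun w => (1 / (n : ℝ)) * ∑ i, ℓ ((T i).2 * (inner ℝ w (T i).1 : ℝ))
            + lam • (N w - 1 / 2 * ‖w‖ ^ 2) := by
      funext w
      rw [hJ T w]
      simp only [smul_eq_mul]
      ring
    rw [hfe]
    exact hadd
  -- notation for minimizers
  set w₁ := fmin D with hw₁
  set w₂ := fmin D' with hw₂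
  set Δ : ℝ := ‖w₁ - w₂‖ with hΔ
  have hΔ0 : 0 ≤ Δ := norm_nonneg _
  -- difference function
  have hdiff : ∀ z, J D' z - J D z =
      (1 / (n : ℝ)) * (ℓ ((D' i₀).2 * (inner ℝ z (D' i₀).1 : ℝ))
        - ℓ ((D i₀).2 * (inner ℝ z (D i₀).1 : ℝ))) := by
    intro z
    rw [hJ D z, hJ D' z]
    have : ∑ i, ℓ ((D' i).2 * (inner ℝ z (D' i).1 : ℝ))
        - ∑ i, ℓ ((D i).2 * (inner ℝ z (D i).1 : ℝ))
        = ℓ ((D' i₀).2 * (inner ℝ z (D' i₀).1 : ℝ)) - ℓ ((D i₀).2 * (inner ℝ z (D i₀).1 : ℝ)) := by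
      rw [← Finset.sum_sub_distrib]
      rw [Finset.sum_eq_single i₀]
      · intro i _ hi
        rw [hi₀ i hi]
        ring
      · intro h; exact absurd (Finset.mem_univ i₀) h
    linear_combination (1 / (n : ℝ)) * this
  -- quadratic growth at the two minimizers
  have hq1 : J D w₁ + lam / 2 * ‖w₂ - w₁‖ ^ 2 ≤ J D w₂ :=
    quad_growth_aux lam hlam (J D) (hsc D) w₁ w₂ (hfmin D)
  have hq2 : J D' w₂ + lam / 2 * ‖w₁ - w₂‖ ^ 2 ≤ J D' w₁ :=
    quad_growth_aux lam hlam (J D') (hsc D') w₂ w₁ (hfmin D')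
  have hrev : ‖w₂ - w₁‖ = Δ := by rw [hΔ, norm_sub_rev]
  -- bound on the difference of differences
  have hgbd : (J D' w₁ - J D w₁) - (J D' w₂ - J D w₂) ≤ (2 / (n : ℝ)) * Δ := by
    rw [hdiff w₁, hdiff w₂]
    have h1 := hterm (D' i₀).1 (D' i₀).2 (hD' i₀).1 (hD' i₀).2 w₁ w₂
    have h2 := hterm (D i₀).1 (D i₀).2 (hD i₀).1 (hD i₀).2 w₁ w₂
    have ha1 := abs_le.mp h1
    have ha2 := abs_le.mp h2
    have hn' : (0:ℝ) ≤ 1 / (n : ℝ) := by positivity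
    have key : (ℓ ((D' i₀).2 * (inner ℝ w₁ (D' i₀).1 : ℝ))
        - ℓ ((D i₀).2 * (inner ℝ w₁ (D i₀).1 : ℝ)))
        - (ℓ ((D' i₀).2 * (inner ℝ w₂ (D' i₀).1 : ℝ))
        - ℓ ((D i₀).2 * (inner ℝ w₂ (D i₀).1 : ℝ))) ≤ 2 * Δ := by
      nlinarith [ha1.1, ha1.2, ha2.1, ha2.2]
    have := mul_le_mul_of_nonneg_left key hn'
    calc (1 / (n : ℝ)) * (ℓ ((D' i₀).2 * (inner ℝ w₁ (D' i₀).1 : ℝ))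
          - ℓ ((D i₀).2 * (inner ℝ w₁ (D i₀).1 : ℝ)))
        - (1 / (n : ℝ)) * (ℓ ((D' i₀).2 * (inner ℝ w₂ (D' i₀).1 : ℝ))
          - ℓ ((D i₀).2 * (inner ℝ w₂ (D i₀).1 : ℝ)))
        = (1 / (n : ℝ)) * ((ℓ ((D' i₀).2 * (inner ℝ w₁ (D' i₀).1 : ℝ))
          - ℓ ((D i₀).2 * (inner ℝ w₁ (D i₀).1 : ℝ)))
          - (ℓ ((D' i₀).2 * (inner ℝ w₂ (D' i₀).1 : ℝ))
          - ℓ ((D i₀).2 * (inner ℝ w₂ (D i₀).1 : ℝ)))) := by ring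
      _ ≤ (1 / (n : ℝ)) * (2 * Δ) := this
      _ = (2 / (n : ℝ)) * Δ := by ring
  -- sensitivity
  have hsens : lam * Δ ^ 2 ≤ (2 / (n : ℝ)) * Δ := by
    rw [hrev] at hq1
    nlinarith [hq1, hq2, hgbd]
  have hΔle : Δ ≤ 2 / ((n : ℝ) * lam) := by
    rcases eq_or_lt_of_le hΔ0 with h | h
    · rw [← h]; positivity
    · have hnR' : (0:ℝ) < n := hnR
      have h1 : lam * Δ ≤ 2 / (n : ℝ) := le_of_mul_le_mul_right (by nlinarith [hsens]) h
      rw [le_div_iff₀ (by positivity : (0:ℝ) < (n : ℝ) * lam)]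
      have h2 : (n : ℝ) * (2 / (n : ℝ)) = 2 := by field_simp
      nlinarith [mul_le_mul_of_nonneg_left h1 hnR'.le, h2]
  have hβΔ : β * Δ ≤ ε := by
    rw [hβ]
    have h2 : (n : ℝ) * lam * ε / 2 * Δ ≤ (n : ℝ) * lam * ε / 2 * (2 / ((n : ℝ) * lam)) :=
      mul_le_mul_of_nonneg_left hΔle (by positivity)
    calc (n : ℝ) * lam * ε / 2 * Δ ≤ (n : ℝ) * lam * ε / 2 * (2 / ((n : ℝ) * lam)) := h2
      _ = ε := by
          have hne : (n : ℝ) * lam ≠ 0 := by positivity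
          field_simp
  have hβ0 : 0 ≤ β := by rw [hβ]; positivity
  have hC0 : 0 ≤ C := by
    rw [hC]; exact integral_nonneg fun b => (Real.exp_pos _).le
  -- measure-theoretic part
  intro S hS
  set f : EuclideanSpace ℝ (Fin d) → ENNReal :=
    fun b => ENNReal.ofReal ((1 / C) * Real.exp (-(β * ‖b‖))) with hf
  have hfmeas : Measurable f := by
    apply ENNReal.measurable_ofReal.comp
    exact (continuous_const.mul ((Real.continuous_exp.comp
      (continuous_const.mul continuous_norm).neg))).measurable
  have hτ : ∀ z : EuclideanSpace ℝ (Fin d), Measurable fun b : EuclideanSpace ℝ (Fin d) => z + b :=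
    fun z => measurable_const.add measurable_id
  have hMD : M D S = ∫⁻ b in ((fun b : EuclideanSpace ℝ (Fin d) => fmin D + b) ⁻¹' S), f b ∂volume := by
    rw [hM D, Measure.map_apply (hτ _) hS, withDensity_apply _ (hS.preimage (hτ _))]
  have hMD' : M D' S = ∫⁻ b in ((fun b : EuclideanSpace ℝ (Fin d) => fmin D' + b) ⁻¹' S), f b ∂volume := by
    rw [hM D', Measure.map_apply (hτ _) hS, withDensity_apply _ (hS.preimage (hτ _))]
  set A : Set (EuclideanSpace ℝ (Fin d)) :=
    (fun b : EuclideanSpace ℝ (Fin d) => fmin D' + b) ⁻¹' S with hA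
  have hAmeas : MeasurableSet A := hS.preimage (hτ _)
  set v : EuclideanSpace ℝ (Fin d) := w₁ - w₂ with hv
  have hvn : ‖v‖ = Δ := by rw [hv, hΔ]
  have hset : ((fun b : EuclideanSpace ℝ (Fin d) => fmin D + b) ⁻¹' S)
      = (fun b : EuclideanSpace ℝ (Fin d) => b + v) ⁻¹' A := by
    ext b
    simp only [Set.mem_preimage, hA]
    have h : fmin D' + (b + v) = fmin D + b := by
      rw [hv, hw₁, hw₂]; abel
    rw [h]
  -- change of variables
  have hmp : MeasurePreserving (fun b : EuclideanSpace ℝ (Fin d) => b + v)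
      (volume : Measure (EuclideanSpace ℝ (Fin d))) volume :=
    measurePreserving_add_right volume v
  have hGmeas : Measurable (A.indicator fun y : EuclideanSpace ℝ (Fin d) => f (y - v)) :=
    (hfmeas.comp (measurable_id.sub measurable_const)).indicator hAmeas
  have hchg : ∫⁻ b in ((fun b : EuclideanSpace ℝ (Fin d) => b + v) ⁻¹' A), f b ∂volume
      = ∫⁻ y in A, f (y - v) ∂volume := by
    rw [← lintegral_indicator (hAmeas.preimage (measurable_add_const v)) _,
        ← lintegral_indicator hAmeas _]
    have heq : ∀ b : EuclideanSpace ℝ (Fin d),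
        ((fun b : EuclideanSpace ℝ (Fin d) => b + v) ⁻¹' A).indicator f b
        = (A.indicator fun y : EuclideanSpace ℝ (Fin d) => f (y - v)) (b + v) := by
      intro b
      by_cases hb : b + v ∈ A
      · rw [Set.indicator_of_mem hb, Set.indicator_of_mem (by exact hb)]
        simp
      · rw [Set.indicator_of_notMem hb, Set.indicator_of_notMem (by exact hb)]
    calc ∫⁻ b, ((fun b : EuclideanSpace ℝ (Fin d) => b + v) ⁻¹' A).indicator f b ∂volume
        = ∫⁻ b, (A.indicator fun y : EuclideanSpace ℝ (Fin d) => f (y - v)) (b + v) ∂volume :=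
          lintegral_congr heq
      _ = ∫⁻ y, (A.indicator fun y : EuclideanSpace ℝ (Fin d) => f (y - v)) y ∂volume :=
          hmp.lintegral_comp hGmeas
  -- pointwise density ratio bound
  have hpt : ∀ y : EuclideanSpace ℝ (Fin d), f (y - v) ≤ ENNReal.ofReal (Real.exp ε) * f y := by
    intro y
    rw [hf]
    have hnorm : ‖y‖ ≤ ‖y - v‖ + ‖v‖ := by
      calc ‖y‖ = ‖(y - v) + v‖ := by rw [sub_add_cancel]
        _ ≤ ‖y - v‖ + ‖v‖ := norm_add_le _ _
    have hexp : Real.exp (-(β * ‖y - v‖)) ≤ Real.exp ε * Real.exp (-(β * ‖y‖)) := by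
      rw [← Real.exp_add]
      apply Real.exp_le_exp.mpr
      have h1 : β * ‖y‖ ≤ β * ‖y - v‖ + β * ‖v‖ := by
        calc β * ‖y‖ ≤ β * (‖y - v‖ + ‖v‖) := mul_le_mul_of_nonneg_left hnorm hβ0
          _ = β * ‖y - v‖ + β * ‖v‖ := by ring
      have h2 : β * ‖v‖ ≤ ε := by rw [hvn]; exact hβΔ
      linarith
    have hle : (1 / C) * Real.exp (-(β * ‖y - v‖))
        ≤ Real.exp ε * ((1 / C) * Real.exp (-(β * ‖y‖))) := by
      have hC' : (0:ℝ) ≤ 1 / C := by positivity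
      calc (1 / C) * Real.exp (-(β * ‖y - v‖))
          ≤ (1 / C) * (Real.exp ε * Real.exp (-(β * ‖y‖))) :=
            mul_le_mul_of_nonneg_left hexp hC'
        _ = Real.exp ε * ((1 / C) * Real.exp (-(β * ‖y‖))) := by ring
    calc ENNReal.ofReal ((1 / C) * Real.exp (-(β * ‖y - v‖)))
        ≤ ENNReal.ofReal (Real.exp ε * ((1 / C) * Real.exp (-(β * ‖y‖)))) :=
          ENNReal.ofReal_le_ofReal hle
      _ = ENNReal.ofReal (Real.exp ε) * ENNReal.ofReal ((1 / C) * Real.exp (-(β * ‖y‖))) :=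
          ENNReal.ofReal_mul (Real.exp_pos _).le
  -- assemble
  rw [hMD, hMD', hset, hchg]
  calc ∫⁻ y in A, f (y - v) ∂volume
      ≤ ∫⁻ y in A, ENNReal.ofReal (Real.exp ε) * f y ∂volume :=
        lintegral_mono fun y => hpt y
    _ = ENNReal.ofReal (Real.exp ε) * ∫⁻ y in A, f y ∂volume := by
        rw [lintegral_const_mul _ hfmeas]
end

section
/- Objective perturbation for regularized ERM is ε-differentially private (Chaudhuri–Monteleoni–Sarwate, Algorithm 1): Fix n ∈ ℕ, λ > 0, ε > 0, c > 0, a regularizer N : ℝ^d → ℝ that is twice differentiable and 1-strongly convex, and a loss ℓ : ℝ → [0,∞) that is convex and twice differentiable with |ℓ'(z)| ≤ 1 and |ℓ''(z)| ≤ c for all z ∈ ℝ. Define ε' = ε − ln(1 + 2c/(nλ) + c²/(n²λ²)); if ε' > 0 set Δ = 0, and otherwise set Δ = c/(n(e^{ε/4} − 1)) − λ and ε' = ε/2. Consider the mechanism M that, on a training set D = {(x_i, y_i)}_{i=1}^n with ‖x_i‖₂ ≤ 1 and y_i ∈ {−1,+1}, samples a noise vector b ∈ ℝ^d with probability density proportional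 to exp(−(ε'/2)‖b‖₂) and outputs f_priv = argmin_{w} [ (1/n) ∑_{i=1}^n ℓ(y_i·⟨w, x_i⟩) + λ·N(w) + (1/n)⟨b, w⟩ + (1/2)Δ‖w‖₂² ]. Then M is ε-differentially private with respect to neighboring training sets: for any two training sets D, D' of size n differing in a single example and every measurable S ⊆ ℝ^d, Pr[M(D) ∈ S] ≤ e^ε · Pr[M(D') ∈ S]. -/
open MeasureTheory

open Set

noncomputable section

lemma deriv_ge_of_slope_ge {ψ : ℝ → ℝ} {a A m : ℝ} (h : HasDerivAt ψ A a)
    (hs : ∀ t, t ≠ a → m ≤ (ψ t - ψ a) / (t - a)) : m ≤ A := by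
  have h2 := hasDerivAt_iff_tendsto_slope.mp h
  refine ge_of_tendsto h2 ?_
  filter_upwards [self_mem_nhdsWithin] with t ht
  simpa [slope_def_field] using hs t ht

variable {E : Type*} [NormedAddCommGroup E] [InnerProductSpace ℝ E]

lemma convex_support {F : E → ℝ} (hF : ConvexOn ℝ univ F) {x : E} {D : E →L[ℝ] ℝ}
    (hD : HasFDerivAt F D x) (y : E) : D (y - x) ≤ F y - F x := by
  have hline : ∀ t : ℝ, AffineMap.lineMap x y t = x + t • (y - x) := by
    intro t; simp [AffineMap.lineMap_apply]; module
  have hφ : ConvexOn ℝ univ (F ∘ (AffineMap.lineMap x y : ℝ →ᵃ[ℝ] E)) := by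
    simpa using hF.comp_affineMap (AffineMap.lineMap x y)
  have h1 : HasDerivAt (fun t : ℝ => x + t • (y - x)) (y - x) 0 := by
    simpa using (((hasDerivAt_id (0:ℝ)).smul_const (y - x)).const_add x)
  have hd : HasDerivAt (F ∘ (AffineMap.lineMap x y : ℝ →ᵃ[ℝ] E)) (D (y - x)) 0 := by
    have hD' : HasFDerivAt F D (x + (0:ℝ) • (y - x)) := by simpa using hD
    have := hD'.comp_hasDerivAt (x := (0:ℝ)) h1
    refine this.congr_of_eventuallyEq ?_
    filter_upwards with t
    simp [hline]
  have := hφ.le_slope_of_hasDerivAt (mem_univ 0) (mem_univ 1) one_pos hd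
  simpa [slope_def_field, hline] using this

lemma grad_mono {F : E → ℝ} {g : E → E} (hF : ConvexOn ℝ univ F)
    (hg : ∀ w, HasFDerivAt F (innerSL ℝ (g w)) w) (x y : E) :
    (0:ℝ) ≤ inner ℝ (g y - g x) (y - x) := by
  have h1 := convex_support hF (hg x) y
  have h2 := convex_support hF (hg y) x
  simp only [innerSL_apply_apply] at h1 h2
  have hxy : (inner ℝ (g y) (x - y) : ℝ) = - inner ℝ (g y) (y - x) := by
    rw [← inner_neg_right]; congr 1; abel
  rw [hxy] at h2
  rw [inner_sub_left]
  linarith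

lemma hess_lower {g : E → E} {H : E →L[ℝ] E} {w : E} {m : ℝ}
    (hg : HasFDerivAt g H w)
    (hmono : ∀ x y : E, m * ‖y - x‖^2 ≤ inner ℝ (g y - g x) (y - x)) (v : E) :
    m * ‖v‖^2 ≤ inner ℝ (H v) v := by
  have hline : HasDerivAt (fun t : ℝ => w + t • v) v 0 := by
    simpa using (((hasDerivAt_id (0:ℝ)).smul_const v).const_add w)
  have hψ : HasDerivAt (fun t : ℝ => ((innerSL ℝ).flip v) (g (w + t • v)))
      (((innerSL ℝ).flip v) (H v)) 0 := by
    have hg' : HasFDerivAt g H (w + (0:ℝ) • v) := by simpa using hg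
    have hcomp : HasFDerivAt (fun u => ((innerSL ℝ).flip v) (g u))
        (((innerSL ℝ).flip v).comp H) (w + (0:ℝ) • v) :=
      (((innerSL ℝ).flip v).hasFDerivAt).comp _ hg'
    exact (hcomp.comp_hasDerivAt (x := (0:ℝ)) hline :)
  have key : ∀ t : ℝ, t ≠ 0 → m * ‖v‖^2 ≤
      ((fun t : ℝ => ((innerSL ℝ).flip v) (g (w + t • v))) t
        - (fun t : ℝ => ((innerSL ℝ).flip v) (g (w + t • v))) 0) / (t - 0) := by
    intro t ht
    have h0 := hmono w (w + t • v)
    have hsub : w + t • v - w = t • v := by abel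
    rw [hsub] at h0
    simp only [ContinuousLinearMap.flip_apply, innerSL_apply_apply]
    have ht2 : (0:ℝ) < t^2 := by positivity
    rw [zero_smul, add_zero, sub_zero]
    have hi : (inner ℝ (g (w + t • v) - g w) (t • v) : ℝ)
        = t * inner ℝ (g (w + t • v) - g w) v := by
      rw [inner_smul_right]
    have hnorm : ‖t • v‖^2 = t^2 * ‖v‖^2 := by
      rw [norm_smul, mul_pow]; simp [sq_abs]
    rw [hnorm, hi] at h0
    have hgoal : m * ‖v‖^2 ≤ (t * inner ℝ (g (w + t • v) - g w) v) / t^2 := by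
      rw [le_div_iff₀ ht2]; linarith
    have : (t * (inner ℝ (g (w + t • v) - g w) v : ℝ)) / t^2
        = (inner ℝ (g (w + t • v) - g w) v : ℝ) / t := by
      field_simp
    rw [this] at hgoal
    rw [inner_sub_left] at hgoal
    convert hgoal using 2 <;> ring_nf
  have := deriv_ge_of_slope_ge hψ key
  exact this


lemma det_one_add_rankOne {d : ℕ} (u x : EuclideanSpace ℝ (Fin d)) :
    LinearMap.det ((LinearMap.id : EuclideanSpace ℝ (Fin d) →ₗ[ℝ] EuclideanSpace ℝ (Fin d))
      + ((innerSL ℝ x).toLinearMap).smulRight u) = 1 + (inner ℝ x u : ℝ) := by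
  classical
  set b := (EuclideanSpace.basisFun (Fin d) ℝ).toBasis with hb
  rw [← LinearMap.det_toMatrix b]
  have hmat : LinearMap.toMatrix b b ((LinearMap.id : EuclideanSpace ℝ (Fin d) →ₗ[ℝ] _)
      + ((innerSL ℝ x).toLinearMap).smulRight u)
      = 1 + Matrix.replicateCol (Fin 1) u * Matrix.replicateRow (Fin 1) x := by
    ext i j
    simp [LinearMap.toMatrix_apply, Matrix.one_apply, hb, PiLp.inner_apply,
      EuclideanSpace.single_apply, Matrix.mul_apply, Matrix.replicateCol_apply, Matrix.replicateRow_apply,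
      mul_comm]
  rw [hmat]
  refine (Matrix.det_one_add_replicateCol_mul_replicateRow (ι := Fin 1) u.ofLp x.ofLp).trans ?_
  simp [dotProduct, PiLp.inner_apply, mul_comm]

lemma det_perturb_bounds {d : ℕ} {m cmax : ℝ} (hm : 0 < m)
    (B : EuclideanSpace ℝ (Fin d) →ₗ[ℝ] EuclideanSpace ℝ (Fin d))
    (hB : ∀ v, m * ‖v‖^2 ≤ inner ℝ (B v) v) (x : EuclideanSpace ℝ (Fin d)) (hx : ‖x‖ ≤ 1)
    {c₁ : ℝ} (hc1 : 0 ≤ c₁) (hc2 : c₁ ≤ cmax) :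
    |LinearMap.det B| ≤ |LinearMap.det (B + ((innerSL ℝ x).toLinearMap).smulRight (c₁ • x))|
    ∧ |LinearMap.det (B + ((innerSL ℝ x).toLinearMap).smulRight (c₁ • x))|
        ≤ (1 + cmax / m) * |LinearMap.det B| := by
  have hinj : Function.Injective B := by
    rw [← LinearMap.ker_eq_bot, LinearMap.ker_eq_bot']
    intro v hv
    have := hB v
    rw [hv] at this
    simp only [inner_zero_left] at this
    by_contra hne
    have : (0:ℝ) < m * ‖v‖^2 := by
      have : (0:ℝ) < ‖v‖ := norm_pos_iff.mpr hne
      positivity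
    linarith [hB v, (by rw [hv]; simp : (inner ℝ (B v) v : ℝ) = 0)]
  have hbij : Function.Bijective B :=
    ⟨hinj, LinearMap.injective_iff_surjective.mp hinj⟩
  set eB := LinearEquiv.ofBijective B hbij with heB
  set u : EuclideanSpace ℝ (Fin d) := eB.symm x with hu
  have hBu : B u = x := eB.apply_symm_apply x
  set q : ℝ := inner ℝ x u with hq
  have hqBu : q = (inner ℝ (B u) u : ℝ) := by rw [hq, hBu]
  have hq0 : 0 ≤ q := by
    rw [hqBu]
    exact le_trans (by positivity) (hB u)
  have hule : ‖u‖ ≤ 1 / m := by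
    rcases eq_or_ne u 0 with h0 | h0
    · rw [h0]; simp; positivity
    · have h1 : m * ‖u‖^2 ≤ ‖u‖ := by
        calc m * ‖u‖^2 ≤ (inner ℝ (B u) u : ℝ) := hB u
        _ = (inner ℝ x u : ℝ) := by rw [hBu]
        _ ≤ ‖x‖ * ‖u‖ := real_inner_le_norm x u
        _ ≤ 1 * ‖u‖ := by
            have := norm_nonneg u
            nlinarith
        _ = ‖u‖ := one_mul _
      have hupos : (0:ℝ) < ‖u‖ := norm_pos_iff.mpr h0
      rw [le_div_iff₀ hm]
      nlinarith [sq_nonneg (‖u‖)]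
  have hqle : q ≤ 1 / m := by
    calc q ≤ ‖x‖ * ‖u‖ := real_inner_le_norm x u
    _ ≤ 1 * (1/m) := by
        have := norm_nonneg u
        have := norm_nonneg x
        have hmpos := hm
        nlinarith
    _ = 1/m := one_mul _
  have hfactor : B + ((innerSL ℝ x).toLinearMap).smulRight (c₁ • x)
      = B ∘ₗ ((LinearMap.id : EuclideanSpace ℝ (Fin d) →ₗ[ℝ] _)
        + ((innerSL ℝ x).toLinearMap).smulRight (c₁ • u)) := by
    ext v
    simp only [LinearMap.add_apply, LinearMap.comp_apply, LinearMap.id_apply, map_add,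
      LinearMap.smulRight_apply, ContinuousLinearMap.coe_coe, innerSL_apply_apply,
      LinearMap.map_smul, hBu]
  have hdet : LinearMap.det (B + ((innerSL ℝ x).toLinearMap).smulRight (c₁ • x))
      = LinearMap.det B * (1 + c₁ * q) := by
    rw [hfactor, LinearMap.det_comp, det_one_add_rankOne]
    rw [inner_smul_right]
  have h1q : (1:ℝ) ≤ 1 + c₁ * q := by nlinarith
  have h2q : 1 + c₁ * q ≤ 1 + cmax / m := by
    have : c₁ * q ≤ cmax * (1/m) := by
      apply mul_le_mul hc2 hqle hq0 (le_trans hc1 hc2)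
    rw [div_eq_mul_one_div cmax m] at *
    linarith
  rw [hdet, abs_mul]
  have habs : |1 + c₁ * q| = 1 + c₁ * q := abs_of_pos (by linarith)
  rw [habs]
  constructor
  · nlinarith [abs_nonneg (LinearMap.det B)]
  · nlinarith [abs_nonneg (LinearMap.det B)]


def dualIso (d : ℕ) : StrongDual ℝ (EuclideanSpace ℝ (Fin d)) →L[ℝ] EuclideanSpace ℝ (Fin d) :=
  LinearMap.mkContinuous
    { toFun := fun f => (InnerProductSpace.toDual ℝ (EuclideanSpace ℝ (Fin d))).symm f
      map_add' := by intros; simp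
      map_smul' := by intros; simp }
    1 (by intro f; simp)

@[simp] lemma inner_dualIso {d : ℕ} (f : StrongDual ℝ (EuclideanSpace ℝ (Fin d)))
    (v : EuclideanSpace ℝ (Fin d)) : (inner ℝ (dualIso d f) v : ℝ) = f v :=
  InnerProductSpace.toDual_symm_apply

def gradN {d : ℕ} (N : EuclideanSpace ℝ (Fin d) → ℝ) (w : EuclideanSpace ℝ (Fin d)) :
    EuclideanSpace ℝ (Fin d) := dualIso d (fderiv ℝ N w)

def HN {d : ℕ} (N : EuclideanSpace ℝ (Fin d) → ℝ) (w : EuclideanSpace ℝ (Fin d)) :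
    EuclideanSpace ℝ (Fin d) →L[ℝ] EuclideanSpace ℝ (Fin d) :=
  (dualIso d).comp (fderiv ℝ (fderiv ℝ N) w)

lemma hasFDerivAt_gradN {d : ℕ} {N : EuclideanSpace ℝ (Fin d) → ℝ}
    (hNdiff2 : Differentiable ℝ (fderiv ℝ N)) (w : EuclideanSpace ℝ (Fin d)) :
    HasFDerivAt (gradN N) (HN N w) w :=
  ((dualIso d).hasFDerivAt).comp w (hNdiff2 w).hasFDerivAt

lemma innerSL_gradN {d : ℕ} {N : EuclideanSpace ℝ (Fin d) → ℝ} (w : EuclideanSpace ℝ (Fin d)) :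
    innerSL ℝ (gradN N w) = fderiv ℝ N w := by
  ext v
  show (inner ℝ (gradN N w) v : ℝ) = _
  rw [gradN, inner_dualIso]

lemma deriv2_nonneg {ℓ : ℝ → ℝ} (hℓconv : ConvexOn ℝ univ ℓ) (hℓdiff : Differentiable ℝ ℓ)
    (hℓdiff2 : Differentiable ℝ (deriv ℓ)) (z : ℝ) : 0 ≤ deriv (deriv ℓ) z := by
  have hmono : Monotone (deriv ℓ) :=
    monotoneOn_univ.1 (hℓconv.monotoneOn_deriv (fun x _ => (hℓdiff x)))
  refine deriv_ge_of_slope_ge (hℓdiff2 z).hasDerivAt ?_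
  intro t ht
  rcases lt_or_gt_of_ne ht with h | h
  · rw [div_nonneg_iff]
    right
    constructor
    · simpa using sub_nonpos.2 (hmono h.le)
    · linarith
  · apply div_nonneg
    · simpa using sub_nonneg.2 (hmono h.le)
    · linarith

def rk {d : ℕ} (x : EuclideanSpace ℝ (Fin d)) :
    EuclideanSpace ℝ (Fin d) →L[ℝ] EuclideanSpace ℝ (Fin d) := (innerSL ℝ x).smulRight x

lemma inner_rk {d : ℕ} (x v : EuclideanSpace ℝ (Fin d)) :
    (inner ℝ (rk x v) v : ℝ) = (inner ℝ x v : ℝ)^2 := by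
  simp [rk, inner_smul_left, sq]

def bT {d : ℕ} (lam Δ : ℝ) (N : EuclideanSpace ℝ (Fin d) → ℝ) (ℓ : ℝ → ℝ) {n : ℕ}
    (T : Fin n → EuclideanSpace ℝ (Fin d) × ℝ) (w : EuclideanSpace ℝ (Fin d)) :
    EuclideanSpace ℝ (Fin d) :=
  -(((n:ℝ) * lam) • gradN N w + ((n:ℝ) * Δ) • w
    + ∑ i, ((T i).2 * deriv ℓ ((T i).2 * (inner ℝ w (T i).1 : ℝ))) • (T i).1)

def AT {d : ℕ} (lam Δ : ℝ) (N : EuclideanSpace ℝ (Fin d) → ℝ) (ℓ : ℝ → ℝ) {n : ℕ}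
    (T : Fin n → EuclideanSpace ℝ (Fin d) × ℝ) (w : EuclideanSpace ℝ (Fin d)) :
    EuclideanSpace ℝ (Fin d) →L[ℝ] EuclideanSpace ℝ (Fin d) :=
  -(((n:ℝ) * lam) • HN N w + ((n:ℝ) * Δ) • ContinuousLinearMap.id ℝ _
    + ∑ i, (deriv (deriv ℓ) ((T i).2 * (inner ℝ w (T i).1 : ℝ)) * (T i).2 ^ 2) • rk (T i).1)

lemma hasFDerivAt_inner_right {d : ℕ} (x w : EuclideanSpace ℝ (Fin d)) :
    HasFDerivAt (fun w : EuclideanSpace ℝ (Fin d) => (inner ℝ w x : ℝ)) (innerSL ℝ x) w := by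
  have : (fun w : EuclideanSpace ℝ (Fin d) => (inner ℝ w x : ℝ))
      = fun w => (innerSL ℝ x) w := by
    funext u
    show (inner ℝ u x : ℝ) = (inner ℝ x u : ℝ)
    rw [real_inner_comm]
  rw [this]
  exact (innerSL ℝ x).hasFDerivAt

lemma hasFDerivAt_term {d : ℕ} {ℓ : ℝ → ℝ} (hℓdiff2 : Differentiable ℝ (deriv ℓ))
    (y : ℝ) (x w : EuclideanSpace ℝ (Fin d)) :
    HasFDerivAt (fun w : EuclideanSpace ℝ (Fin d) => (y * deriv ℓ (y * (inner ℝ w x : ℝ))) • x)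
      ((deriv (deriv ℓ) (y * (inner ℝ w x : ℝ)) * y ^ 2) • rk x) w := by
  have hz : HasFDerivAt (fun w : EuclideanSpace ℝ (Fin d) => y * (inner ℝ w x : ℝ))
      (y • innerSL ℝ x) w := by
    simpa using (hasFDerivAt_inner_right x w).const_mul y
  have hφ : HasFDerivAt (fun w : EuclideanSpace ℝ (Fin d) => deriv ℓ (y * (inner ℝ w x : ℝ)))
      (deriv (deriv ℓ) (y * (inner ℝ w x : ℝ)) • (y • innerSL ℝ x)) w :=
    (hℓdiff2 (y * (inner ℝ w x : ℝ))).hasDerivAt.comp_hasFDerivAt (f := fun w : EuclideanSpace ℝ (Fin d) => y * (inner ℝ w x : ℝ)) w hz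
  have h2 := (hφ.const_mul y).smul_const x
  refine h2.congr_fderiv (Eq.symm ?_)
  ext1 v
  simp [rk, smul_smul]
  ring

lemma hasFDerivAt_bT {d n : ℕ} (lam Δ : ℝ) {N : EuclideanSpace ℝ (Fin d) → ℝ} {ℓ : ℝ → ℝ}
    (hNdiff2 : Differentiable ℝ (fderiv ℝ N)) (hℓdiff2 : Differentiable ℝ (deriv ℓ))
    (T : Fin n → EuclideanSpace ℝ (Fin d) × ℝ) (w : EuclideanSpace ℝ (Fin d)) :
    HasFDerivAt (bT lam Δ N ℓ T) (AT lam Δ N ℓ T w) w := by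
  unfold bT AT
  refine HasFDerivAt.neg ?_
  refine HasFDerivAt.add (HasFDerivAt.add ?_ ?_) ?_
  · exact (hasFDerivAt_gradN hNdiff2 w).const_smul ((n:ℝ) * lam)
  · exact (hasFDerivAt_id w).const_smul ((n:ℝ) * Δ)
  · exact HasFDerivAt.fun_sum (fun i _ => hasFDerivAt_term hℓdiff2 (T i).2 (T i).1 w)

lemma gradN_strong_mono {d : ℕ} {N : EuclideanSpace ℝ (Fin d) → ℝ}
    (hNdiff : Differentiable ℝ N)
    (hNsc : ConvexOn ℝ univ fun w => N w - (1 / 2) * ‖w‖ ^ 2)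
    (x y : EuclideanSpace ℝ (Fin d)) :
    ‖y - x‖^2 ≤ inner ℝ (gradN N y - gradN N x) (y - x) := by
  have hgrad : ∀ w : EuclideanSpace ℝ (Fin d),
      HasFDerivAt (fun w => N w - (1 / 2) * ‖w‖ ^ 2) (innerSL ℝ (gradN N w - w)) w := by
    intro w
    have h1 : HasFDerivAt N (innerSL ℝ (gradN N w)) w := by
      rw [innerSL_gradN]; exact (hNdiff w).hasFDerivAt
    have h2 : HasFDerivAt (fun w : EuclideanSpace ℝ (Fin d) => (1/2:ℝ) * ‖w‖ ^ 2)
        (innerSL ℝ w) w := by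
      have h3 := ((hasFDerivAt_id w).norm_sq).const_mul (1/2:ℝ)
      refine h3.congr_fderiv (Eq.symm ?_)
      ext1 v
      show (inner ℝ w v : ℝ) = _
      simp [two_smul]
      ring
    have h4 := h1.sub h2
    refine h4.congr_fderiv (Eq.symm ?_)
    ext1 v
    show (inner ℝ (gradN N w - w) v : ℝ) = _
    simp [inner_sub_left]
  have hm := grad_mono hNsc hgrad x y
  have h4 : (gradN N y - y) - (gradN N x - x) = (gradN N y - gradN N x) - (y - x) := by abel
  rw [h4, inner_sub_left, real_inner_self_eq_norm_sq] at hm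
  linarith

lemma HN_lower {d : ℕ} {N : EuclideanSpace ℝ (Fin d) → ℝ}
    (hNdiff : Differentiable ℝ N) (hNdiff2 : Differentiable ℝ (fderiv ℝ N))
    (hNsc : ConvexOn ℝ univ fun w => N w - (1 / 2) * ‖w‖ ^ 2)
    (w v : EuclideanSpace ℝ (Fin d)) : ‖v‖^2 ≤ inner ℝ (HN N w v) v := by
  have h := hess_lower (m := 1) (hasFDerivAt_gradN hNdiff2 w)
    (fun x y => by rw [one_mul]; exact gradN_strong_mono hNdiff hNsc x y) v
  rw [one_mul] at h
  exact h

lemma bT_strong_mono {d n : ℕ} (lam Δ : ℝ) {N : EuclideanSpace ℝ (Fin d) → ℝ} {ℓ : ℝ → ℝ}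
    (hNdiff : Differentiable ℝ N)
    (hNsc : ConvexOn ℝ univ fun w => N w - (1 / 2) * ‖w‖ ^ 2)
    (hmono : Monotone (deriv ℓ)) (hnlam : 0 ≤ (n:ℝ) * lam)
    (T : Fin n → EuclideanSpace ℝ (Fin d) × ℝ) (w₁ w₂ : EuclideanSpace ℝ (Fin d)) :
    ((n:ℝ) * lam + (n:ℝ) * Δ) * ‖w₁ - w₂‖^2
      ≤ inner ℝ (bT lam Δ N ℓ T w₂ - bT lam Δ N ℓ T w₁) (w₁ - w₂) := by
  have key : bT lam Δ N ℓ T w₂ - bT lam Δ N ℓ T w₁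
      = ((n:ℝ) * lam) • (gradN N w₁ - gradN N w₂) + ((n:ℝ) * Δ) • (w₁ - w₂)
        + ∑ i, (((T i).2 * deriv ℓ ((T i).2 * (inner ℝ w₁ (T i).1 : ℝ)))
            - ((T i).2 * deriv ℓ ((T i).2 * (inner ℝ w₂ (T i).1 : ℝ)))) • (T i).1 := by
    unfold bT
    rw [Finset.sum_congr rfl (fun i _ => sub_smul _ _ ((T i).1)), Finset.sum_sub_distrib]
    simp only [smul_sub]
    abel
  rw [key, inner_add_left, inner_add_left, inner_smul_left, inner_smul_left, sum_inner]
  simp only [RCLike.inner_apply, conj_trivial, starRingEnd_apply, star_trivial]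
  have hN' : ‖w₁ - w₂‖^2 ≤ inner ℝ (gradN N w₁ - gradN N w₂) (w₁ - w₂) :=
    gradN_strong_mono hNdiff hNsc w₂ w₁
  have hself : (inner ℝ (w₁ - w₂) (w₁ - w₂) : ℝ) = ‖w₁ - w₂‖^2 := real_inner_self_eq_norm_sq _
  have hsum : (0:ℝ) ≤ ∑ i, (inner ℝ ((((T i).2 * deriv ℓ ((T i).2 * (inner ℝ w₁ (T i).1 : ℝ)))
      - ((T i).2 * deriv ℓ ((T i).2 * (inner ℝ w₂ (T i).1 : ℝ)))) • (T i).1) (w₁ - w₂) : ℝ) := by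
    apply Finset.sum_nonneg
    intro i _
    rw [inner_smul_left]
    simp only [RCLike.inner_apply, conj_trivial, starRingEnd_apply, star_trivial]
    set y := (T i).2
    set x := (T i).1
    set z₁ := y * (inner ℝ w₁ x : ℝ)
    set z₂ := y * (inner ℝ w₂ x : ℝ)
    have hz : z₁ - z₂ = y * (inner ℝ x (w₁ - w₂) : ℝ) := by
      rw [real_inner_comm, inner_sub_left]
      simp [z₁, z₂]
      ring
    have hfact : (y * deriv ℓ z₁ - y * deriv ℓ z₂) * (inner ℝ x (w₁ - w₂) : ℝ)
        = (deriv ℓ z₁ - deriv ℓ z₂) * (z₁ - z₂) := by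
      rw [hz]; ring
    rw [show ((y * deriv ℓ z₁ - y * deriv ℓ z₂) * (inner ℝ x (w₁ - w₂) : ℝ))
      = (deriv ℓ z₁ - deriv ℓ z₂) * (z₁ - z₂) from hfact]
    rcases le_total z₂ z₁ with h | h
    · exact mul_nonneg (sub_nonneg.2 (hmono h)) (sub_nonneg.2 h)
    · have := mul_nonneg (sub_nonneg.2 (hmono h)) (sub_nonneg.2 h)
      nlinarith
  have hgN : (n:ℝ) * lam * ‖w₁ - w₂‖^2
      ≤ (n:ℝ) * lam * (inner ℝ (gradN N w₁ - gradN N w₂) (w₁ - w₂) : ℝ) :=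
    mul_le_mul_of_nonneg_left hN' hnlam
  rw [hself]
  nlinarith [hsum, hgN]

lemma bT_inj {d n : ℕ} (lam Δ : ℝ) {N : EuclideanSpace ℝ (Fin d) → ℝ} {ℓ : ℝ → ℝ}
    (hNdiff : Differentiable ℝ N)
    (hNsc : ConvexOn ℝ univ fun w => N w - (1 / 2) * ‖w‖ ^ 2)
    (hmono : Monotone (deriv ℓ)) (hnlam : 0 ≤ (n:ℝ) * lam)
    (hm : 0 < (n:ℝ) * lam + (n:ℝ) * Δ)
    (T : Fin n → EuclideanSpace ℝ (Fin d) × ℝ) :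
    Function.Injective (bT lam Δ N ℓ T) := by
  intro w₁ w₂ h
  have hsm := bT_strong_mono lam Δ hNdiff hNsc hmono hnlam T w₁ w₂
  rw [h] at hsm
  simp only [sub_self, inner_zero_left] at hsm
  have : ‖w₁ - w₂‖^2 ≤ 0 := by
    by_contra hcon
    push_neg at hcon
    nlinarith
  have : w₁ - w₂ = 0 := by
    have h0 := sq_nonneg (‖w₁ - w₂‖)
    have : ‖w₁ - w₂‖^2 = 0 := le_antisymm this h0
    have := pow_eq_zero_iff (n := 2) (by norm_num) |>.mp this
    exact norm_eq_zero.mp this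
  exact sub_eq_zero.mp this

lemma B_lower {d n : ℕ} (m₁ m₂ : ℝ) (hm₁ : 0 ≤ m₁)
    (H : EuclideanSpace ℝ (Fin d) →L[ℝ] EuclideanSpace ℝ (Fin d))
    (hH : ∀ v, ‖v‖^2 ≤ inner ℝ (H v) v)
    (s : Finset (Fin n)) (x : Fin n → EuclideanSpace ℝ (Fin d)) (cf : Fin n → ℝ)
    (hcf : ∀ i, 0 ≤ cf i) (v : EuclideanSpace ℝ (Fin d)) :
    (m₁ + m₂) * ‖v‖^2 ≤
      inner ℝ (((m₁ • H + m₂ • ContinuousLinearMap.id ℝ (EuclideanSpace ℝ (Fin d))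
        + ∑ i ∈ s, cf i • rk (x i)) : EuclideanSpace ℝ (Fin d) →L[ℝ]
          EuclideanSpace ℝ (Fin d)) v) v := by
  have h1 : m₁ * ‖v‖^2 ≤ m₁ * (inner ℝ (H v) v : ℝ) := mul_le_mul_of_nonneg_left (hH v) hm₁
  have h2 : (0:ℝ) ≤ ∑ i ∈ s, cf i * (inner ℝ ((rk (x i)) v) v : ℝ) := by
    apply Finset.sum_nonneg
    intro i _
    have hri : (inner ℝ (rk (x i) v) v : ℝ) = (inner ℝ (x i) v : ℝ)^2 := inner_rk _ _
    rw [hri]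
    exact mul_nonneg (hcf i) (sq_nonneg _)
  have hself : (inner ℝ v v : ℝ) = ‖v‖^2 := real_inner_self_eq_norm_sq _
  simp only [ContinuousLinearMap.add_apply, ContinuousLinearMap.smul_apply,
    ContinuousLinearMap.id_apply, ContinuousLinearMap.sum_apply, inner_add_left,
    inner_smul_left, sum_inner, conj_trivial, hself]
  nlinarith [h1, h2]

lemma coe_rk_smul {d : ℕ} (c₁ : ℝ) (x : EuclideanSpace ℝ (Fin d)) :
    ((c₁ • rk x : EuclideanSpace ℝ (Fin d) →L[ℝ] EuclideanSpace ℝ (Fin d)) :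
      EuclideanSpace ℝ (Fin d) →ₗ[ℝ] EuclideanSpace ℝ (Fin d))
    = ((innerSL ℝ x).toLinearMap).smulRight (c₁ • x) := by
  ext1 v
  show c₁ • ((innerSL ℝ x) v • x) = ((innerSL ℝ x) v) • (c₁ • x)
  exact smul_comm c₁ ((innerSL ℝ x) v) x
lemma case_arith {n : ℕ} (hn : 0 < n) {lam ε c ε'₀ ε' Δ : ℝ}
    (hlam : 0 < lam) (hε : 0 < ε) (hc : 0 < c)
    (hε'₀ : ε'₀ = ε - Real.log (1 + 2 * c / (n * lam) + c ^ 2 / (n ^ 2 * lam ^ 2)))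
    (hε' : ε' = if 0 < ε'₀ then ε'₀ else ε / 2)
    (hΔ : Δ = if 0 < ε'₀ then 0 else c / (n * (Real.exp (ε / 4) - 1)) - lam) :
    0 < (n:ℝ) * lam + (n:ℝ) * Δ ∧ 0 < ε' ∧
      Real.exp ε' * (1 + c / ((n:ℝ) * lam + (n:ℝ) * Δ)) ≤ Real.exp ε := by
  have hnR : (0:ℝ) < n := by exact_mod_cast hn
  by_cases hcase : 0 < ε'₀
  · rw [if_pos hcase] at hε' hΔ
    subst hΔ
    set a : ℝ := c / ((n:ℝ) * lam) with ha
    have ha0 : 0 < a := by positivity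
    have hR : 1 + 2 * c / (n * lam) + c ^ 2 / (n ^ 2 * lam ^ 2) = (1 + a) ^ 2 := by
      rw [ha]
      field_simp
      ring
    have hm : (0:ℝ) < (n:ℝ) * lam + (n:ℝ) * 0 := by simpa using by positivity
    refine ⟨hm, by rw [hε']; exact hcase, ?_⟩
    have h1a : (0:ℝ) < 1 + a := by linarith
    have hexp : Real.exp ε' = Real.exp ε / (1 + a) ^ 2 := by
      rw [hε', hε'₀, hR, Real.exp_sub, Real.exp_log (by positivity)]
    have hfrac : c / ((n:ℝ) * lam + (n:ℝ) * 0) = a := by rw [ha]; ring_nf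
    rw [hexp, hfrac]
    rw [div_mul_eq_mul_div, div_le_iff₀ (by positivity)]
    nlinarith [mul_nonneg (Real.exp_pos ε).le (mul_nonneg h1a.le ha0.le)]
  · rw [if_neg hcase] at hε' hΔ
    have hE : (0:ℝ) < Real.exp (ε / 4) - 1 := by
      have := Real.exp_lt_exp.mpr (show (0:ℝ) < ε / 4 by linarith)
      simp only [Real.exp_zero] at this
      linarith
    have hm : (n:ℝ) * lam + (n:ℝ) * Δ = c / (Real.exp (ε / 4) - 1) := by
      rw [hΔ]
      field_simp
      ring
    have hmpos : (0:ℝ) < (n:ℝ) * lam + (n:ℝ) * Δ := by rw [hm]; positivity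
    refine ⟨hmpos, by rw [hε']; linarith, ?_⟩
    have hfrac : 1 + c / ((n:ℝ) * lam + (n:ℝ) * Δ) = Real.exp (ε / 4) := by
      rw [hm]
      field_simp
      ring
    rw [hfrac, hε', ← Real.exp_add]
    apply Real.exp_le_exp.mpr
    linarith

lemma abs_det_neg_clm {d : ℕ} (K : EuclideanSpace ℝ (Fin d) →L[ℝ] EuclideanSpace ℝ (Fin d)) :
    |(-K).det| = |LinearMap.det ((K : EuclideanSpace ℝ (Fin d) →L[ℝ] EuclideanSpace ℝ (Fin d)) :
      EuclideanSpace ℝ (Fin d) →ₗ[ℝ] EuclideanSpace ℝ (Fin d))| := by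
  have h : (((-K) : EuclideanSpace ℝ (Fin d) →L[ℝ] EuclideanSpace ℝ (Fin d)) :
      EuclideanSpace ℝ (Fin d) →ₗ[ℝ] EuclideanSpace ℝ (Fin d))
      = (-1 : ℝ) • ((K : EuclideanSpace ℝ (Fin d) →L[ℝ] EuclideanSpace ℝ (Fin d)) :
        EuclideanSpace ℝ (Fin d) →ₗ[ℝ] EuclideanSpace ℝ (Fin d)) := by
    ext v; simp
  show |LinearMap.det _| = _
  rw [h, LinearMap.det_smul, abs_mul, abs_pow, abs_neg, abs_one, one_pow, one_mul]

set_option maxHeartbeats 2000000 in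
/-- **Objective perturbation for regularized ERM is `ε`-differentially private
(Chaudhuri–Monteleoni–Sarwate, Algorithm 1).** With `ε' = ε - ln(1 + 2c/(nλ) + c²/(n²λ²))`
if this is positive (and then `Δ = 0`), and otherwise `ε' = ε/2` and
`Δ = c/(n(e^{ε/4} - 1)) - λ`, the mechanism samples `b` with density proportional to
`exp (-(ε'/2) ‖b‖₂)` and outputs
`argmin_w [(1/n) ∑ ℓ(yᵢ ⟪w, xᵢ⟫) + λ N(w) + (1/n) ⟪b, w⟫ + (1/2) Δ ‖w‖²]`.
It is `ε`-differentially private w.r.t. training sets differing in one example. -/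
theorem objective_perturbation_dp {d n : ℕ} (hn : 0 < n) (lam ε c : ℝ)
    (hlam : 0 < lam) (hε : 0 < ε) (hc : 0 < c)
    (N : EuclideanSpace ℝ (Fin d) → ℝ)
    (hNdiff : Differentiable ℝ N) (hNdiff2 : Differentiable ℝ (fderiv ℝ N))
    (hNsc : ConvexOn ℝ Set.univ fun w => N w - (1 / 2) * ‖w‖ ^ 2)
    (ℓ : ℝ → ℝ) (hℓ0 : ∀ z, 0 ≤ ℓ z)
    (hℓconv : ConvexOn ℝ Set.univ ℓ)
    (hℓdiff : Differentiable ℝ ℓ) (hℓdiff2 : Differentiable ℝ (deriv ℓ))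
    (hℓ' : ∀ z, |deriv ℓ z| ≤ 1) (hℓ'' : ∀ z, |deriv (deriv ℓ) z| ≤ c)
    -- the privacy parameter `ε'` and regularization correction `Δ` of Algorithm 1
    (ε'₀ ε' Δ : ℝ)
    (hε'₀ : ε'₀ = ε - Real.log (1 + 2 * c / (n * lam) + c ^ 2 / (n ^ 2 * lam ^ 2)))
    (hε' : ε' = if 0 < ε'₀ then ε'₀ else ε / 2)
    (hΔ : Δ = if 0 < ε'₀ then 0 else c / (n * (Real.exp (ε / 4) - 1)) - lam)
    -- the perturbed objective
    (Jp : (Fin n → EuclideanSpace ℝ (Fin d) × ℝ) → EuclideanSpace ℝ (Fin d) →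
      EuclideanSpace ℝ (Fin d) → ℝ)
    (hJp : ∀ T b w, Jp T b w =
      (1 / (n : ℝ)) * ∑ i, ℓ ((T i).2 * (inner ℝ w (T i).1 : ℝ)) + lam * N w +
        (1 / (n : ℝ)) * (inner ℝ b w : ℝ) + (1 / 2) * Δ * ‖w‖ ^ 2)
    -- the minimizer of the perturbed objective, given the noise vector `b`
    (fpriv : (Fin n → EuclideanSpace ℝ (Fin d) × ℝ) → EuclideanSpace ℝ (Fin d) →
      EuclideanSpace ℝ (Fin d))
    (hfpriv : ∀ T b u, Jp T b (fpriv T b) ≤ Jp T b u)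
    -- the normalizing constant of the noise density
    (C : ℝ) (hC : C = ∫ b : EuclideanSpace ℝ (Fin d), Real.exp (-(ε' / 2 * ‖b‖)))
    -- the objective-perturbation mechanism
    (M : (Fin n → EuclideanSpace ℝ (Fin d) × ℝ) → Measure (EuclideanSpace ℝ (Fin d)))
    (hM : ∀ T, M T =
      (volume.withDensity fun b =>
        ENNReal.ofReal ((1 / C) * Real.exp (-(ε' / 2 * ‖b‖)))).map fun b => fpriv T b)
    -- neighboring valid training sets
    (D D' : Fin n → EuclideanSpace ℝ (Fin d) × ℝ)
    (hD : ∀ i, ‖(D i).1‖ ≤ 1 ∧ ((D i).2 = -1 ∨ (D i).2 = 1))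
    (hD' : ∀ i, ‖(D' i).1‖ ≤ 1 ∧ ((D' i).2 = -1 ∨ (D' i).2 = 1))
    (hneighbor : ∃ i₀ : Fin n, ∀ i, i ≠ i₀ → D i = D' i) :
    ∀ S : Set (EuclideanSpace ℝ (Fin d)), MeasurableSet S →
      M D S ≤ ENNReal.ofReal (Real.exp ε) * M D' S := by
  intro S hS
  classical
  obtain ⟨i₀, hi₀⟩ := hneighbor
  have hnR : (0:ℝ) < n := by exact_mod_cast hn
  have hnne : (n:ℝ) ≠ 0 := ne_of_gt hnR
  obtain ⟨hm_pos, hε'pos, hkey⟩ := case_arith hn hlam hε hc hε'₀ hε' hΔ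
  set m : ℝ := (n:ℝ) * lam + (n:ℝ) * Δ with hm_def
  have hnlam : 0 ≤ (n:ℝ) * lam := by positivity
  have hmono : Monotone (deriv ℓ) :=
    monotoneOn_univ.1 (hℓconv.monotoneOn_deriv (fun x _ => (hℓdiff x)))
  have hℓ''0 : ∀ z, 0 ≤ deriv (deriv ℓ) z := deriv2_nonneg hℓconv hℓdiff hℓdiff2
  have hℓ''c : ∀ z, deriv (deriv ℓ) z ≤ c := fun z => (abs_le.mp (hℓ'' z)).2
  have hC0 : 0 ≤ C := by
    rw [hC]; exact integral_nonneg (fun b => (Real.exp_pos _).le)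
  -- critical point identity
  have hcrit : ∀ T b, bT lam Δ N ℓ T (fpriv T b) = b := by
    intro T b
    set w := fpriv T b with hw
    have hmin : IsMinOn (Jp T b) univ w := fun u _ => hfpriv T b u
    have hloc : IsLocalMin (Jp T b) w := hmin.isLocalMin (by simp)
    have hsum : HasFDerivAt (fun w : EuclideanSpace ℝ (Fin d) =>
        ∑ i, ℓ ((T i).2 * (inner ℝ w (T i).1 : ℝ)))
        (∑ i, deriv ℓ ((T i).2 * (inner ℝ w (T i).1 : ℝ)) • ((T i).2 • innerSL ℝ (T i).1)) w := by
      refine HasFDerivAt.fun_sum (fun i _ => ?_)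
      have hz : HasFDerivAt (fun w : EuclideanSpace ℝ (Fin d) => (T i).2 * (inner ℝ w (T i).1 : ℝ))
          ((T i).2 • innerSL ℝ (T i).1) w := by
        simpa using (hasFDerivAt_inner_right (T i).1 w).const_mul (T i).2
      exact (hℓdiff _).hasDerivAt.comp_hasFDerivAt w hz
    have hJd0 := (((hsum.const_mul (1/(n:ℝ))).add ((hNdiff w).hasFDerivAt.const_mul lam)).add
        (((innerSL ℝ b).hasFDerivAt).const_mul (1/(n:ℝ)))).add
        (((hasFDerivAt_id w).norm_sq).const_mul ((1/2) * Δ))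
    have hfn : Jp T b = fun u => (1 / (n : ℝ)) * ∑ i, ℓ ((T i).2 * (inner ℝ u (T i).1 : ℝ))
        + lam * N u + (1 / (n : ℝ)) * (inner ℝ b u : ℝ) + (1 / 2) * Δ * ‖u‖ ^ 2 :=
      funext (hJp T b)
    have hJd : HasFDerivAt (Jp T b)
        ((1/(n:ℝ)) • (∑ i, deriv ℓ ((T i).2 * (inner ℝ w (T i).1 : ℝ)) •
            ((T i).2 • innerSL ℝ (T i).1))
          + lam • (fderiv ℝ N w) + (1/(n:ℝ)) • innerSL ℝ b
          + ((1/2) * Δ) • (2 • (innerSL ℝ (id w)).comp (ContinuousLinearMap.id ℝ _))) w := by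
      rw [hfn]
      exact hJd0
    have h0 : fderiv ℝ (Jp T b) w = 0 := hloc.fderiv_eq_zero
    have hDJ := hJd.fderiv
    rw [h0] at hDJ
    apply ext_inner_right ℝ
    intro v
    have hv := congrFun (congrArg (fun (L : EuclideanSpace ℝ (Fin d) →L[ℝ]  ℝ) => (L : EuclideanSpace ℝ (Fin d) → ℝ)) hDJ.symm) v
    simp only [ContinuousLinearMap.add_apply, ContinuousLinearMap.coe_smul', Pi.smul_apply,
      ContinuousLinearMap.sum_apply, ContinuousLinearMap.smul_apply, innerSL_apply_apply,
      smul_eq_mul, ContinuousLinearMap.comp_apply, ContinuousLinearMap.id_apply,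
      ContinuousLinearMap.zero_apply, id_eq, nsmul_eq_mul, Nat.cast_ofNat,
      ContinuousLinearMap.coe_zero, Pi.zero_apply] at hv
    unfold bT
    simp only [inner_neg_left, inner_add_left, inner_smul_left, sum_inner,
      conj_trivial, RCLike.inner_apply, starRingEnd_apply, star_trivial]
    have hgNv : (inner ℝ (gradN N w) v : ℝ) = fderiv ℝ N w v := inner_dualIso _ _
    rw [hgNv]
    have hsum_eq : ∑ x : Fin n, deriv ℓ ((T x).2 * (inner ℝ w (T x).1 : ℝ))
          * ((T x).2 * (inner ℝ (T x).1 v : ℝ))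
        = ∑ x : Fin n, (T x).2 * deriv ℓ ((T x).2 * (inner ℝ w (T x).1 : ℝ))
          * (inner ℝ (T x).1 v : ℝ) :=
      Finset.sum_congr rfl fun i _ => by ring
    rw [hsum_eq] at hv
    set P := ∑ x : Fin n, (T x).2 * deriv ℓ ((T x).2 * (inner ℝ w (T x).1 : ℝ))
      * (inner ℝ (T x).1 v : ℝ) with hP
    set Q := (fderiv ℝ N w) v with hQ
    set R := (inner ℝ b v : ℝ) with hR
    set W := (inner ℝ w v : ℝ) with hW
    field_simp at hv
    linarith [hv]
  have hinj : ∀ T : Fin n → EuclideanSpace ℝ (Fin d) × ℝ,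
      Function.Injective (bT lam Δ N ℓ T) := fun T =>
    bT_inj lam Δ hNdiff hNsc hmono hnlam hm_pos T
  have hleft : ∀ T w, fpriv T (bT lam Δ N ℓ T w) = w := fun T w =>
    hinj T (hcrit T (bT lam Δ N ℓ T w))
  have hpre : ∀ T (A : Set (EuclideanSpace ℝ (Fin d))),
      fpriv T ⁻¹' A = bT lam Δ N ℓ T '' A := by
    intro T A
    ext b
    constructor
    · intro hb
      exact ⟨fpriv T b, hb, hcrit T b⟩
    · rintro ⟨w, hw, rfl⟩
      simpa [hleft T w] using hw
  have hcont : ∀ T : Fin n → EuclideanSpace ℝ (Fin d) × ℝ,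
      Continuous (bT lam Δ N ℓ T) := by
    intro T
    have hdiff : Differentiable ℝ (bT lam Δ N ℓ T) :=
      fun w => (hasFDerivAt_bT lam Δ hNdiff2 hℓdiff2 T w).differentiableAt
    exact hdiff.continuous
  have hembed : ∀ T : Fin n → EuclideanSpace ℝ (Fin d) × ℝ,
      MeasurableEmbedding (bT lam Δ N ℓ T) := fun T =>
    (hcont T).measurableEmbedding (hinj T)
  have hmeas : ∀ T : Fin n → EuclideanSpace ℝ (Fin d) × ℝ, Measurable (fpriv T) := by
    intro T A hA
    rw [hpre T A]
    exact (hembed T).measurableSet_image.mpr hA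
  -- measure computation
  have hMz : ∀ T : Fin n → EuclideanSpace ℝ (Fin d) × ℝ, M T S =
      ∫⁻ w in S, ENNReal.ofReal |(AT lam Δ N ℓ T w).det| *
        ENNReal.ofReal ((1 / C) * Real.exp (-(ε' / 2 * ‖bT lam Δ N ℓ T w‖))) := by
    intro T
    rw [hM T, Measure.map_apply (hmeas T) hS, withDensity_apply _ (by
      rw [hpre T S]; exact (hembed T).measurableSet_image.mpr hS), hpre T S]
    exact lintegral_image_eq_lintegral_abs_det_fderiv_mul volume hS
      (fun x _ => (hasFDerivAt_bT lam Δ hNdiff2 hℓdiff2 T x).hasFDerivWithinAt)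
      ((hinj T).injOn) _
  -- pointwise bound
  have hpoint : ∀ w : EuclideanSpace ℝ (Fin d),
      ENNReal.ofReal |(AT lam Δ N ℓ D w).det| *
        ENNReal.ofReal ((1 / C) * Real.exp (-(ε' / 2 * ‖bT lam Δ N ℓ D w‖)))
      ≤ ENNReal.ofReal (Real.exp ε) * (ENNReal.ofReal |(AT lam Δ N ℓ D' w).det| *
        ENNReal.ofReal ((1 / C) * Real.exp (-(ε' / 2 * ‖bT lam Δ N ℓ D' w‖)))) := by
    intro w
    obtain ⟨hxD, hyD⟩ := hD i₀
    obtain ⟨hxD', hyD'⟩ := hD' i₀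
    have hyD2 : ((D i₀).2)^2 = 1 := by rcases hyD with h|h <;> rw [h] <;> norm_num
    have hyD'2 : ((D' i₀).2)^2 = 1 := by rcases hyD' with h|h <;> rw [h] <;> norm_num
    have hyDabs : |(D i₀).2| = 1 := by rcases hyD with h|h <;> rw [h] <;> norm_num
    have hyD'abs : |(D' i₀).2| = 1 := by rcases hyD' with h|h <;> rw [h] <;> norm_num
    set cfD : Fin n → ℝ :=
      fun i => deriv (deriv ℓ) ((D i).2 * (inner ℝ w (D i).1 : ℝ)) * (D i).2 ^ 2 with hcfD
    set cfD' : Fin n → ℝ :=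
      fun i => deriv (deriv ℓ) ((D' i).2 * (inner ℝ w (D' i).1 : ℝ)) * (D' i).2 ^ 2 with hcfD'
    have hcfD0 : ∀ i, 0 ≤ cfD i := fun i => mul_nonneg (hℓ''0 _) (sq_nonneg _)
    have hcfD'0 : ∀ i, 0 ≤ cfD' i := fun i => mul_nonneg (hℓ''0 _) (sq_nonneg _)
    have hcfDc : cfD i₀ ≤ c := by
      rw [hcfD]; simp only []; rw [hyD2, mul_one]; exact hℓ''c _
    have hcfD'c : cfD' i₀ ≤ c := by
      rw [hcfD']; simp only []; rw [hyD'2, mul_one]; exact hℓ''c _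
    set K0 : EuclideanSpace ℝ (Fin d) →L[ℝ] EuclideanSpace ℝ (Fin d) :=
      ((n:ℝ) * lam) • HN N w + ((n:ℝ) * Δ) • ContinuousLinearMap.id ℝ (EuclideanSpace ℝ (Fin d))
        + ∑ i ∈ Finset.univ.erase i₀, cfD i • rk (D i).1 with hK0
    have hATD : AT lam Δ N ℓ D w = -(K0 + cfD i₀ • rk (D i₀).1) := by
      unfold AT
      rw [hK0, ← Finset.sum_erase_add Finset.univ _ (Finset.mem_univ i₀)]
      congr 1
      abel
    have hATD' : AT lam Δ N ℓ D' w = -(K0 + cfD' i₀ • rk (D' i₀).1) := by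
      unfold AT
      rw [hK0, ← Finset.sum_erase_add Finset.univ _ (Finset.mem_univ i₀)]
      congr 1
      have hsc : ∑ i ∈ Finset.univ.erase i₀, cfD' i • rk (D' i).1
          = ∑ i ∈ Finset.univ.erase i₀, cfD i • rk (D i).1 := by
        refine Finset.sum_congr rfl (fun i hi => ?_)
        simp only [hcfD, hcfD', hi₀ i (Finset.ne_of_mem_erase hi)]
      rw [← hsc]
      abel
    set B0 : EuclideanSpace ℝ (Fin d) →ₗ[ℝ] EuclideanSpace ℝ (Fin d) :=
      (K0 : EuclideanSpace ℝ (Fin d) →ₗ[ℝ] EuclideanSpace ℝ (Fin d)) with hB0def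
    have hB0 : ∀ v, m * ‖v‖^2 ≤ inner ℝ (B0 v) v := by
      intro v
      have := B_lower ((n:ℝ) * lam) ((n:ℝ) * Δ) hnlam (HN N w)
        (HN_lower hNdiff hNdiff2 hNsc w) (Finset.univ.erase i₀)
        (fun i => (D i).1) cfD hcfD0 v
      exact this
    have hdetD : |(AT lam Δ N ℓ D w).det|
        = |LinearMap.det (B0 + ((innerSL ℝ (D i₀).1).toLinearMap).smulRight
            (cfD i₀ • (D i₀).1))| := by
      rw [hATD, abs_det_neg_clm]
      congr 2
      rw [ContinuousLinearMap.coe_add, coe_rk_smul, hB0def]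
    have hdetD' : |(AT lam Δ N ℓ D' w).det|
        = |LinearMap.det (B0 + ((innerSL ℝ (D' i₀).1).toLinearMap).smulRight
            (cfD' i₀ • (D' i₀).1))| := by
      rw [hATD', abs_det_neg_clm]
      congr 2
      rw [ContinuousLinearMap.coe_add, coe_rk_smul, hB0def]
    obtain ⟨hloD, hhiD⟩ := det_perturb_bounds hm_pos B0 hB0 (D i₀).1 hxD (hcfD0 i₀) hcfDc
    obtain ⟨hloD', hhiD'⟩ := det_perturb_bounds hm_pos B0 hB0 (D' i₀).1 hxD' (hcfD'0 i₀) hcfD'c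
    have hdet_le : |(AT lam Δ N ℓ D w).det| ≤ (1 + c / m) * |(AT lam Δ N ℓ D' w).det| := by
      rw [hdetD, hdetD']
      have hk : (0:ℝ) ≤ 1 + c / m := by positivity
      calc |LinearMap.det (B0 + ((innerSL ℝ (D i₀).1).toLinearMap).smulRight
            (cfD i₀ • (D i₀).1))| ≤ (1 + c / m) * |LinearMap.det B0| := hhiD
      _ ≤ (1 + c / m) * |LinearMap.det (B0 + ((innerSL ℝ (D' i₀).1).toLinearMap).smulRight
            (cfD' i₀ • (D' i₀).1))| := mul_le_mul_of_nonneg_left hloD' hk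
    -- norm bound
    have hterm : ∀ (T : Fin n → EuclideanSpace ℝ (Fin d) × ℝ),
        ‖(T i₀).1‖ ≤ 1 → |(T i₀).2| = 1 →
        ‖((T i₀).2 * deriv ℓ ((T i₀).2 * (inner ℝ w (T i₀).1 : ℝ))) • (T i₀).1‖ ≤ 1 := by
      intro T hx hy
      rw [norm_smul]
      have h1 : |(T i₀).2 * deriv ℓ ((T i₀).2 * (inner ℝ w (T i₀).1 : ℝ))| ≤ 1 := by
        rw [abs_mul, hy, one_mul]
        exact hℓ' _
      calc ‖(T i₀).2 * deriv ℓ ((T i₀).2 * (inner ℝ w (T i₀).1 : ℝ))‖ * ‖(T i₀).1‖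
          ≤ 1 * 1 := by
            apply mul_le_mul _ hx (norm_nonneg _) zero_le_one
            rw [Real.norm_eq_abs]; exact h1
      _ = 1 := one_mul 1
    have hbsub : bT lam Δ N ℓ D' w = bT lam Δ N ℓ D w
        + (((D i₀).2 * deriv ℓ ((D i₀).2 * (inner ℝ w (D i₀).1 : ℝ))) • (D i₀).1
          - ((D' i₀).2 * deriv ℓ ((D' i₀).2 * (inner ℝ w (D' i₀).1 : ℝ))) • (D' i₀).1) := by
      unfold bT
      have hsumdiff : (∑ i, ((D i).2 * deriv ℓ ((D i).2 * (inner ℝ w (D i).1 : ℝ))) • (D i).1)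
          - ∑ i, ((D' i).2 * deriv ℓ ((D' i).2 * (inner ℝ w (D' i).1 : ℝ))) • (D' i).1
          = ((D i₀).2 * deriv ℓ ((D i₀).2 * (inner ℝ w (D i₀).1 : ℝ))) • (D i₀).1
            - ((D' i₀).2 * deriv ℓ ((D' i₀).2 * (inner ℝ w (D' i₀).1 : ℝ))) • (D' i₀).1 := by
        rw [← Finset.sum_sub_distrib, Finset.sum_eq_single i₀]
        · intro b _ hb
          rw [hi₀ b hb, sub_self]
        · intro h; exact absurd (Finset.mem_univ i₀) h
      have := hsumdiff
      rw [sub_eq_iff_eq_add] at this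
      rw [this]
      abel
    have hnormb : ‖bT lam Δ N ℓ D' w‖ ≤ ‖bT lam Δ N ℓ D w‖ + 2 := by
      rw [hbsub]
      calc ‖bT lam Δ N ℓ D w + _‖ ≤ ‖bT lam Δ N ℓ D w‖
          + ‖((D i₀).2 * deriv ℓ ((D i₀).2 * (inner ℝ w (D i₀).1 : ℝ))) • (D i₀).1
            - ((D' i₀).2 * deriv ℓ ((D' i₀).2 * (inner ℝ w (D' i₀).1 : ℝ))) • (D' i₀).1‖ :=
        norm_add_le _ _
      _ ≤ ‖bT lam Δ N ℓ D w‖ + 2 := by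
          have h2 := norm_sub_le
            (((D i₀).2 * deriv ℓ ((D i₀).2 * (inner ℝ w (D i₀).1 : ℝ))) • (D i₀).1)
            (((D' i₀).2 * deriv ℓ ((D' i₀).2 * (inner ℝ w (D' i₀).1 : ℝ))) • (D' i₀).1)
          have h3 := hterm D hxD hyDabs
          have h4 := hterm D' hxD' hyD'abs
          linarith
    have hexp_le : Real.exp (-(ε' / 2 * ‖bT lam Δ N ℓ D w‖))
        ≤ Real.exp ε' * Real.exp (-(ε' / 2 * ‖bT lam Δ N ℓ D' w‖)) := by
      rw [← Real.exp_add]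
      apply Real.exp_le_exp.mpr
      nlinarith [mul_le_mul_of_nonneg_left hnormb (by positivity : (0:ℝ) ≤ ε' / 2)]
    -- final real inequality
    have hreal : |(AT lam Δ N ℓ D w).det| * ((1 / C) * Real.exp (-(ε' / 2 * ‖bT lam Δ N ℓ D w‖)))
        ≤ Real.exp ε * (|(AT lam Δ N ℓ D' w).det|
          * ((1 / C) * Real.exp (-(ε' / 2 * ‖bT lam Δ N ℓ D' w‖)))) := by
      set a1 := |(AT lam Δ N ℓ D w).det|
      set a2 := |(AT lam Δ N ℓ D' w).det|
      set E1 := Real.exp (-(ε' / 2 * ‖bT lam Δ N ℓ D w‖))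
      set E2 := Real.exp (-(ε' / 2 * ‖bT lam Δ N ℓ D' w‖))
      have hE1 : (0:ℝ) < E1 := Real.exp_pos _
      have hE2 : (0:ℝ) < E2 := Real.exp_pos _
      have ha2 : (0:ℝ) ≤ a2 := abs_nonneg _
      have hk : (0:ℝ) ≤ 1 + c / m := by positivity
      have hstep1 : a1 * ((1/C) * E1) ≤ ((1 + c / m) * a2) * ((1/C) * (Real.exp ε' * E2)) := by
        apply mul_le_mul hdet_le _ (by positivity) (by positivity)
        exact mul_le_mul_of_nonneg_left hexp_le (by positivity)
      have hstep2 : ((1 + c / m) * a2) * ((1/C) * (Real.exp ε' * E2))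
          = (Real.exp ε' * (1 + c / m)) * (a2 * ((1/C) * E2)) := by ring
      have hstep3 : (Real.exp ε' * (1 + c / m)) * (a2 * ((1/C) * E2))
          ≤ Real.exp ε * (a2 * ((1/C) * E2)) :=
        mul_le_mul_of_nonneg_right hkey (by positivity)
      linarith
    calc ENNReal.ofReal |(AT lam Δ N ℓ D w).det|
        * ENNReal.ofReal ((1 / C) * Real.exp (-(ε' / 2 * ‖bT lam Δ N ℓ D w‖)))
        = ENNReal.ofReal (|(AT lam Δ N ℓ D w).det|
          * ((1 / C) * Real.exp (-(ε' / 2 * ‖bT lam Δ N ℓ D w‖)))) :=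
      (ENNReal.ofReal_mul (abs_nonneg _)).symm
    _ ≤ ENNReal.ofReal (Real.exp ε * (|(AT lam Δ N ℓ D' w).det|
          * ((1 / C) * Real.exp (-(ε' / 2 * ‖bT lam Δ N ℓ D' w‖))))) :=
      ENNReal.ofReal_le_ofReal hreal
    _ = ENNReal.ofReal (Real.exp ε) * (ENNReal.ofReal |(AT lam Δ N ℓ D' w).det|
        * ENNReal.ofReal ((1 / C) * Real.exp (-(ε' / 2 * ‖bT lam Δ N ℓ D' w‖)))) := by
      rw [ENNReal.ofReal_mul (Real.exp_pos ε).le, ENNReal.ofReal_mul (abs_nonneg _)]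
  calc M D S = ∫⁻ w in S, ENNReal.ofReal |(AT lam Δ N ℓ D w).det| *
      ENNReal.ofReal ((1 / C) * Real.exp (-(ε' / 2 * ‖bT lam Δ N ℓ D w‖))) := hMz D
  _ ≤ ∫⁻ w in S, ENNReal.ofReal (Real.exp ε) * (ENNReal.ofReal |(AT lam Δ N ℓ D' w).det| *
      ENNReal.ofReal ((1 / C) * Real.exp (-(ε' / 2 * ‖bT lam Δ N ℓ D' w‖)))) :=
    lintegral_mono (fun w => hpoint w)
  _ = ENNReal.ofReal (Real.exp ε) * ∫⁻ w in S, ENNReal.ofReal |(AT lam Δ N ℓ D' w).det| *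
      ENNReal.ofReal ((1 / C) * Real.exp (-(ε' / 2 * ‖bT lam Δ N ℓ D' w‖))) :=
    lintegral_const_mul' _ _ ENNReal.ofReal_ne_top
  _ = ENNReal.ofReal (Real.exp ε) * M D' S := by rw [hMz D']
end
end
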